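/- arXiv:2410.15139 — 11 statements merged into one kernel-verified Lean document; each statement's English description precedes it below -/
import Mathlib

section
/- Let w̃ : D^n(δ) → D^n(δ) be a map, and let C ⊂ D^n(δ) be a nonempty set with w̃(C) ⊂ C. Let {Λ_α}_{α∈I} be the (possibly uncountable) family of all absorbing sets for w̃ in C. Then the intersection M := ∩_{α∈I} Λ_α is exactly the set of all periodic points of w̃ in C, and consequently w̃(M) = M. -/
open Set

noncomputable section

/-- The δ-discretization of ℝⁿ: the set of centers of the cubes of the δ-grid,
i.e. `D^n(δ) = {δm : m ∈ ℤⁿ}`, viewed as a subset of `ℝⁿ = Fin n → ℝ`. -/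
def Dgrid (n : ℕ) (δ : ℝ) : Set (Fin n → ℝ) :=
  {x | ∃ m : Fin n → ℤ, x = fun j => δ * (m j : ℝ)}

/-- `Λ` is an absorbing set for `w` in `C`: `Λ ⊆ C` and every orbit of a point of `C`
eventually enters and stays in `Λ`. -/
def IsAbsorbing {X : Type*} (w : X → X) (C Λ : Set X) : Prop :=
  Λ ⊆ C ∧ ∀ x ∈ C, ∃ N : ℕ, ∀ i ≥ N, w^[i] x ∈ Λ

lemma iterate_mem {X : Type*} (w : X → X) (C : Set X) (hwC : w '' C ⊆ C)
    {x : X} (hx : x ∈ C) : ∀ i : ℕ, w^[i] x ∈ C := by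
  intro i
  induction i with
  | zero => simpa using hx
  | succ i ih =>
      rw [Function.iterate_succ_apply']
      exact hwC ⟨_, ih, rfl⟩

/-- the intersection of all absorbing sets for `w̃` in `C` is exactly the
set of periodic points of `w̃` in `C`, and consequently this intersection is mapped
onto itself by `w̃`. -/
theorem stmt_0 (n : ℕ) (hn : 1 ≤ n) (δ : ℝ) (hδ : 0 < δ)
    (w : (Fin n → ℝ) → (Fin n → ℝ)) (hw : ∀ x ∈ Dgrid n δ, w x ∈ Dgrid n δ)
    (C : Set (Fin n → ℝ)) (hC : C ⊆ Dgrid n δ) (hCne : C.Nonempty)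
    (hwC : w '' C ⊆ C) :
    (⋂₀ {Λ | IsAbsorbing w C Λ}) = {x ∈ C | ∃ k ≥ 1, w^[k] x = x} ∧
      w '' (⋂₀ {Λ | IsAbsorbing w C Λ}) = ⋂₀ {Λ | IsAbsorbing w C Λ} := by
  have hCabs : IsAbsorbing w C C :=
    ⟨le_refl C, fun x hx => ⟨0, fun i _ => iterate_mem w C hwC hx i⟩⟩
  have hmain : (⋂₀ {Λ | IsAbsorbing w C Λ}) = {x ∈ C | ∃ k ≥ 1, w^[k] x = x} := by
    apply Set.eq_of_subset_of_subset
    · intro x hx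
      have hxC : x ∈ C := hx C hCabs
      refine ⟨hxC, ?_⟩
      by_contra hper
      push_neg at hper
      -- `C \ {x}` is absorbing
      have habs : IsAbsorbing w C (C \ {x}) := by
        refine ⟨Set.diff_subset, fun y hy => ?_⟩
        by_cases h : ∃ i : ℕ, w^[i] y = x
        · obtain ⟨i0, hi0⟩ := h
          refine ⟨i0 + 1, fun i hi => ⟨iterate_mem w C hwC hy i, ?_⟩⟩
          simp only [Set.mem_singleton_iff]
          intro hix
          refine hper (i - i0) (by omega) ?_
          calc w^[i - i0] x = w^[i - i0] (w^[i0] y) := by rw [hi0]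
            _ = w^[i] y := by
                rw [← Function.iterate_add_apply]; congr 1; omega
            _ = x := hix
        · push_neg at h
          exact ⟨0, fun i _ => ⟨iterate_mem w C hwC hy i, h i⟩⟩
      have := hx _ habs
      exact this.2 rfl
    · rintro x ⟨hxC, k, hk, hkx⟩ Λ hΛ
      obtain ⟨N, hN⟩ := hΛ.2 x hxC
      have hiter : ∀ m : ℕ, w^[k * m] x = x := by
        intro m
        induction m with
        | zero => simp
        | succ m ih =>
            rw [Nat.mul_succ, Function.iterate_add_apply, hkx]
            exact ih
      have hkN : k * N ≥ N := Nat.le_mul_of_pos_left N (by omega)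
      have := hN (k * N) hkN
      rwa [hiter N] at this
  refine ⟨hmain, ?_⟩
  rw [hmain]
  apply Set.eq_of_subset_of_subset
  · rintro _ ⟨x, ⟨hxC, k, hk, hkx⟩, rfl⟩
    refine ⟨hwC ⟨x, hxC, rfl⟩, k, hk, ?_⟩
    rw [← Function.iterate_succ_apply, Function.iterate_succ_apply', hkx]
  · rintro x ⟨hxC, k, hk, hkx⟩
    refine ⟨w^[k - 1] x, ⟨iterate_mem w C hwC hxC _, k, hk, ?_⟩, ?_⟩
    · rw [← Function.iterate_add_apply, show k + (k - 1) = (k - 1) + k by omega,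
        Function.iterate_add_apply, hkx]
    · rw [← Function.iterate_succ_apply' w (k - 1) x, Nat.succ_eq_add_one,
        Nat.sub_add_cancel hk]
      exact hkx
end
end

section
/- Let w : ℝ^n → ℝ^n be a contraction with respect to the metric d, with contraction factor λ ∈ [0, 1), and let w̃ : D^n(δ) → D^n(δ) be its δ-roundoff. Then for every point x̃ ∈ D^n(δ) and every i ∈ ℕ, d(w̃^∘i(x̃), w^∘i(x̃)) ≤ θ(1 − λ)^{−1}. -/
open Set

noncomputable section

/-- The δ-roundoff of a point `x ∈ ℝⁿ`: the center of the half-open δ-cube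
`C_δ(m) = ∏ⱼ [(mⱼ - 1/2)δ, (mⱼ + 1/2)δ)` containing `x`. -/
def roundPt (n : ℕ) (δ : ℝ) (x : Fin n → ℝ) : Fin n → ℝ :=
  fun j => δ * (⌊x j / δ + 1 / 2⌋ : ℤ)

/-- The δ-roundoff of a mapping `w : ℝⁿ → ℝⁿ`, i.e. `w̃(x̃) = (w(x̃))~`
(considered on the grid `D^n(δ)`, which this map preserves). -/
def roundMap (n : ℕ) (δ : ℝ) (w : (Fin n → ℝ) → (Fin n → ℝ)) :
    (Fin n → ℝ) → (Fin n → ℝ) :=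
  fun x => roundPt n δ (w x)

/-- The diameter, with respect to the metric induced by the norm `nrm`, of a δ-cube
of the δ-grid (taken for the cube centered at the origin); `θ` is half this value. -/
def cubeDiam (n : ℕ) (δ : ℝ) (nrm : (Fin n → ℝ) → ℝ) : ℝ :=
  sSup {r | ∃ x y : Fin n → ℝ,
    (∀ j, -(δ / 2) ≤ x j ∧ x j < δ / 2) ∧
    (∀ j, -(δ / 2) ≤ y j ∧ y j < δ / 2) ∧ r = nrm (x - y)}

/-- if `w` is a contraction with factor `λ ∈ [0,1)` with respect to a
norm-induced metric `d(x,y) = ‖x - y‖`, then the orbit of any grid point under the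
δ-roundoff `w̃` shadows its orbit under `w`:
`d(w̃^∘i(x̃), w^∘i(x̃)) ≤ θ (1 - λ)⁻¹` for all `i`. -/
theorem stmt_3 (n : ℕ) (hn : 1 ≤ n) (δ : ℝ) (hδ : 0 < δ)
    (nrm : (Fin n → ℝ) → ℝ)
    (hnrm_eq : ∀ x, nrm x = 0 ↔ x = 0)
    (hnrm_smul : ∀ (a : ℝ) (x : Fin n → ℝ), nrm (a • x) = |a| * nrm x)
    (hnrm_add : ∀ x y : Fin n → ℝ, nrm (x + y) ≤ nrm x + nrm y)
    (w : (Fin n → ℝ) → (Fin n → ℝ))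
    (lam : ℝ) (hlam : lam ∈ Set.Ico (0 : ℝ) 1)
    (hcontr : ∀ x y : Fin n → ℝ, nrm (w x - w y) ≤ lam * nrm (x - y))
    (θ : ℝ) (hθ : θ = cubeDiam n δ nrm / 2) :
    ∀ x ∈ Dgrid n δ, ∀ i : ℕ,
      nrm ((roundMap n δ w)^[i] x - w^[i] x) ≤ θ * (1 - lam)⁻¹ := by
  obtain ⟨hlam0, hlam1⟩ := hlam
  have h1m : (0:ℝ) < 1 - lam := by linarith
  have hnrm0 : nrm 0 = 0 := by
    have h := hnrm_smul 0 0
    simpa using h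
  have hneg : ∀ x : Fin n → ℝ, nrm (-x) = nrm x := by
    intro x
    have h := hnrm_smul (-1) x
    simpa using h
  have hnonneg : ∀ x : Fin n → ℝ, 0 ≤ nrm x := by
    intro x
    have h := hnrm_add x (-x)
    rw [add_neg_cancel, hnrm0, hneg] at h
    linarith
  set S : Set ℝ := {r | ∃ x y : Fin n → ℝ,
    (∀ j, -(δ / 2) ≤ x j ∧ x j < δ / 2) ∧
    (∀ j, -(δ / 2) ≤ y j ∧ y j < δ / 2) ∧ r = nrm (x - y)} with hS
  have hD : cubeDiam n δ nrm = sSup S := rfl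
  -- sum bound for nrm
  have hsum : ∀ (s : Finset (Fin n)) (f : Fin n → (Fin n → ℝ)),
      nrm (∑ j ∈ s, f j) ≤ ∑ j ∈ s, nrm (f j) := by
    intro s f
    induction s using Finset.induction_on with
    | empty => simp [hnrm0]
    | insert _ _ hns ih =>
      rw [Finset.sum_insert hns, Finset.sum_insert hns]
      exact le_trans (hnrm_add _ _) (by linarith)
  have hbound : ∀ v : Fin n → ℝ, (∀ j, |v j| ≤ δ) →
      nrm v ≤ δ * ∑ j : Fin n, nrm (Pi.single j 1) := by
    intro v hv
    have hv' : v = ∑ j : Fin n, Pi.single j (v j) := (Finset.univ_sum_single v).symm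
    calc nrm v = nrm (∑ j : Fin n, Pi.single j (v j)) := by rw [← hv']
      _ ≤ ∑ j : Fin n, nrm (Pi.single j (v j)) := hsum _ _
      _ ≤ ∑ j : Fin n, δ * nrm (Pi.single j 1) := by
          apply Finset.sum_le_sum
          intro j _
          have hsingle : Pi.single j (v j) = v j • (Pi.single j 1 : Fin n → ℝ) := by
            funext k
            by_cases hk : k = j <;> simp [Pi.single_apply, hk]
          rw [hsingle, hnrm_smul]
          exact mul_le_mul_of_nonneg_right (hv j) (hnonneg _)
      _ = δ * ∑ j : Fin n, nrm (Pi.single j 1) := by rw [Finset.mul_sum]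
  have hBdd : BddAbove S := by
    refine ⟨δ * ∑ j : Fin n, nrm (Pi.single j 1), ?_⟩
    rintro r ⟨x, y, hx, hy, rfl⟩
    apply hbound
    intro j
    have h1 := hx j
    have h2 := hy j
    rw [abs_le]
    constructor <;> simp only [Pi.sub_apply] <;> nlinarith
  have h0S : (0:ℝ) ∈ S := by
    have hcube0 : ∀ j : Fin n, -(δ / 2) ≤ (0:Fin n → ℝ) j ∧ (0:Fin n → ℝ) j < δ / 2 := by
      intro j
      constructor <;> simp <;> linarith
    exact ⟨0, 0, hcube0, hcube0, by simp [hnrm0]⟩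
  have hDpos : 0 ≤ cubeDiam n δ nrm := by
    rw [hD]
    exact le_csSup hBdd h0S
  have hθ0 : 0 ≤ θ := by rw [hθ]; linarith
  -- key roundoff lemma
  have key : ∀ z : Fin n → ℝ, nrm (roundPt n δ z - z) ≤ θ := by
    intro z
    set u : Fin n → ℝ := fun j => z j - roundPt n δ z j with hu
    have hucube : ∀ j, -(δ / 2) ≤ u j ∧ u j < δ / 2 := by
      intro j
      have hfl : (⌊z j / δ + 1 / 2⌋ : ℝ) ≤ z j / δ + 1 / 2 := Int.floor_le _
      have hfl2 : z j / δ + 1 / 2 < ⌊z j / δ + 1 / 2⌋ + 1 := Int.lt_floor_add_one _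
      have huj : u j = z j - δ * (⌊z j / δ + 1 / 2⌋ : ℤ) := rfl
      have hz : z j = (z j / δ) * δ := by field_simp
      constructor <;> rw [huj] <;> nlinarith
    have hueq : roundPt n δ z - z = -u := by
      funext j
      simp [hu]
    rw [hueq, hneg]
    -- show 2 * nrm u ≤ cubeDiam
    have h2u : 2 * nrm u ≤ cubeDiam n δ nrm := by
      rcases eq_or_lt_of_le (hnonneg u) with hc | hc
      · rw [← hc]; simpa using hDpos
      · apply le_of_forall_pos_le_add
        intro ε hε
        set ε₀ : ℝ := min 1 (ε / nrm u) with hε₀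
        have hε₀pos : 0 < ε₀ := lt_min one_pos (div_pos hε hc)
        have hε₀le1 : ε₀ ≤ 1 := min_le_left _ _
        have hmem : (2 - ε₀) * nrm u ∈ S := by
          refine ⟨u, (-(1 - ε₀)) • u, hucube, ?_, ?_⟩
          · intro j
            have h1 := (hucube j).1
            have h2 := (hucube j).2
            have habs : |u j| ≤ δ / 2 := by rw [abs_le]; constructor <;> linarith
            have : |(-(1 - ε₀)) * u j| = (1 - ε₀) * |u j| := by
              rw [abs_mul, abs_neg, abs_of_nonneg (by linarith : (0:ℝ) ≤ 1 - ε₀)]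
            have hlt : |(-(1 - ε₀)) * u j| < δ / 2 := by
              rw [this]
              nlinarith [abs_nonneg (u j)]
            have := abs_lt.mp hlt
            constructor <;> simp only [Pi.smul_apply, smul_eq_mul] <;> nlinarith [this.1, this.2]
          · have : u - (-(1 - ε₀)) • u = (2 - ε₀) • u := by
              funext j
              simp only [Pi.sub_apply, Pi.smul_apply, smul_eq_mul]
              ring
            rw [this, hnrm_smul, abs_of_nonneg (by linarith : (0:ℝ) ≤ 2 - ε₀)]
        have hle := le_csSup hBdd hmem
        have hεc : ε₀ * nrm u ≤ ε := by
          have : ε₀ ≤ ε / nrm u := min_le_right _ _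
          calc ε₀ * nrm u ≤ (ε / nrm u) * nrm u :=
                mul_le_mul_of_nonneg_right this (hnonneg u)
            _ = ε := by field_simp
        rw [hD]
        nlinarith
    rw [hθ]
    linarith
  -- main induction
  intro x hx i
  induction i with
  | zero =>
    simp only [Function.iterate_zero, id_eq, sub_self, hnrm0]
    positivity
  | succ i ih =>
    rw [Function.iterate_succ_apply', Function.iterate_succ_apply']
    set a := (roundMap n δ w)^[i] x
    set b := w^[i] x
    have htri : nrm (roundMap n δ w a - w b) ≤
        nrm (roundMap n δ w a - w a) + nrm (w a - w b) := by
      have h := hnrm_add (roundMap n δ w a - w a) (w a - w b)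
      rwa [sub_add_sub_cancel] at h
    have h1 : nrm (roundMap n δ w a - w a) ≤ θ := key (w a)
    have h2 : nrm (w a - w b) ≤ lam * nrm (a - b) := hcontr a b
    have h3 : lam * nrm (a - b) ≤ lam * (θ * (1 - lam)⁻¹) :=
      mul_le_mul_of_nonneg_left ih hlam0
    have heq : θ + lam * (θ * (1 - lam)⁻¹) = θ * (1 - lam)⁻¹ := by
      field_simp
      ring
    linarith
end
end

section
/- Let w : ℝ^n → ℝ^n be a contraction with respect to the metric d with contraction factor λ ∈ [0, 1) and fixed point x_f ∈ ℝ^n, and let w̃ : D^n(δ) → D^n(δ) be its δ-roundoff. Set r_0 = θ(1 − λ)^{−1} and Λ(x_f, r_0) = {ỹ ∈ D^n(δ) : d(ỹ, x_f) ≤ r_0}. Then Λ(x_f, r_0) is an absorbing set for w̃ in D^n(δ), and moreover w̃(Λ(x_f, r_0)) ⊂ Λ(x_f, r_0). -/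
open Set

noncomputable section

/-- Type copy of `Fin n → ℝ` used to carry the abstract norm. -/
def ECopy (n : ℕ) : Type := Fin n → ℝ

/-- Subadditivity over finite sums for an abstract norm. -/
lemma nrm_sum_le {n : ℕ} (nrm : (Fin n → ℝ) → ℝ) (hz : nrm 0 = 0)
    (hadd : ∀ x y : Fin n → ℝ, nrm (x + y) ≤ nrm x + nrm y)
    {ι : Type*} [DecidableEq ι] (s : Finset ι) (f : ι → (Fin n → ℝ)) :
    nrm (∑ i ∈ s, f i) ≤ ∑ i ∈ s, nrm (f i) := by
  induction s using Finset.induction with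
  | empty => simp [hz]
  | insert a s h ih =>
    rw [Finset.sum_insert h, Finset.sum_insert h]
    exact le_trans (hadd _ _) (by linarith)

/-- Coercivity of an abstract norm on `ℝⁿ`, via finite-dimensionality. -/
lemma nrm_coercive {n : ℕ} (nrm : (Fin n → ℝ) → ℝ)
    (hnrm_eq : ∀ x, nrm x = 0 ↔ x = 0)
    (hnrm_smul : ∀ (a : ℝ) (x : Fin n → ℝ), nrm (a • x) = |a| * nrm x)
    (hnrm_add : ∀ x y : Fin n → ℝ, nrm (x + y) ≤ nrm x + nrm y)
    (hnn : ∀ x, 0 ≤ nrm x) (hz : nrm 0 = 0)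
    (hneg : ∀ x, nrm (-x) = nrm x) :
    ∃ c : ℝ, 0 < c ∧ ∀ x : Fin n → ℝ, ∀ j, |x j| ≤ c * nrm x := by
  letI : AddCommGroup (ECopy n) := inferInstanceAs (AddCommGroup (Fin n → ℝ))
  letI : Module ℝ (ECopy n) := inferInstanceAs (Module ℝ (Fin n → ℝ))
  letI : NormedAddCommGroup (ECopy n) := AddGroupNorm.toNormedAddCommGroup
    { toFun := fun x => nrm x
      map_zero' := hz
      add_le' := hnrm_add
      neg' := hneg
      eq_zero_of_map_eq_zero' := fun x hx => (hnrm_eq x).mp hx }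
  letI : NormedSpace ℝ (ECopy n) :=
    { norm_smul_le := fun a x => le_of_eq (by
        show nrm (a • x) = ‖a‖ * nrm x
        exact (hnrm_smul a x).trans (by rw [Real.norm_eq_abs])) }
  letI : FiniteDimensional ℝ (ECopy n) :=
    inferInstanceAs (FiniteDimensional ℝ (Fin n → ℝ))
  let f : ECopy n →ₗ[ℝ] (Fin n → ℝ) :=
    { toFun := fun x => x
      map_add' := fun _ _ => rfl
      map_smul' := fun _ _ => rfl }
  have hf : Continuous f := f.continuous_of_finiteDimensional
  let g : ECopy n →L[ℝ] (Fin n → ℝ) := ⟨f, hf⟩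
  refine ⟨max ‖g‖ 1, lt_of_lt_of_le one_pos (le_max_right _ _), fun x j => ?_⟩
  have h1 : ‖x‖ ≤ ‖g‖ * nrm x := g.le_opNorm x
  have h2 : |x j| ≤ ‖x‖ := by
    simpa [Real.norm_eq_abs] using norm_le_pi_norm x j
  have h3 : ‖g‖ * nrm x ≤ max ‖g‖ 1 * nrm x :=
    mul_le_mul_of_nonneg_right (le_max_left _ _) (hnn x)
  linarith

set_option maxHeartbeats 1000000

/-- for a contraction `w` with factor `λ ∈ [0,1)` and fixed point `x_f`,
the set `Λ(x_f, r₀) = {ỹ ∈ D^n(δ) : d(ỹ, x_f) ≤ r₀}` with `r₀ = θ(1-λ)⁻¹` is an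
absorbing set for the δ-roundoff `w̃` in `D^n(δ)`, and `w̃` maps it into itself. -/
theorem stmt_4 (n : ℕ) (hn : 1 ≤ n) (δ : ℝ) (hδ : 0 < δ)
    (nrm : (Fin n → ℝ) → ℝ)
    (hnrm_eq : ∀ x, nrm x = 0 ↔ x = 0)
    (hnrm_smul : ∀ (a : ℝ) (x : Fin n → ℝ), nrm (a • x) = |a| * nrm x)
    (hnrm_add : ∀ x y : Fin n → ℝ, nrm (x + y) ≤ nrm x + nrm y)
    (w : (Fin n → ℝ) → (Fin n → ℝ))
    (lam : ℝ) (hlam : lam ∈ Set.Ico (0 : ℝ) 1)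
    (hcontr : ∀ x y : Fin n → ℝ, nrm (w x - w y) ≤ lam * nrm (x - y))
    (xf : Fin n → ℝ) (hxf : w xf = xf)
    (θ : ℝ) (hθ : θ = cubeDiam n δ nrm / 2)
    (Λ : Set (Fin n → ℝ))
    (hΛ : Λ = {y ∈ Dgrid n δ | nrm (y - xf) ≤ θ * (1 - lam)⁻¹}) :
    IsAbsorbing (roundMap n δ w) (Dgrid n δ) Λ ∧
      ∀ y ∈ Λ, roundMap n δ w y ∈ Λ := by
  classical
  have hδ2 : 0 < δ / 2 := by linarith
  -- basic properties of the norm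
  have hz : nrm 0 = 0 := (hnrm_eq 0).mpr rfl
  have hneg : ∀ x, nrm (-x) = nrm x := by
    intro x
    have := hnrm_smul (-1) x
    simpa using this
  have hnn : ∀ x, 0 ≤ nrm x := by
    intro x
    have h1 := hnrm_add x (-x)
    rw [add_neg_cancel, hz, hneg] at h1
    linarith
  -- bound by coordinates (upper)
  have hcoordbound : ∀ x : Fin n → ℝ,
      nrm x ≤ ∑ j : Fin n, |x j| * nrm (fun k => if j = k then 1 else 0) := by
    intro x
    have hx : x = ∑ j : Fin n, x j • fun k => if j = k then (1:ℝ) else 0 :=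
      pi_eq_sum_univ x
    calc nrm x = nrm (∑ j : Fin n, x j • fun k => if j = k then (1:ℝ) else 0) := by
          rw [← hx]
      _ ≤ ∑ j : Fin n, nrm (x j • fun k => if j = k then (1:ℝ) else 0) :=
          nrm_sum_le nrm hz hnrm_add _ _
      _ = ∑ j : Fin n, |x j| * nrm (fun k => if j = k then (1:ℝ) else 0) := by
          refine Finset.sum_congr rfl fun j _ => ?_
          exact hnrm_smul _ _
  -- the set defining the cube diameter
  set S : Set ℝ := {r | ∃ x y : Fin n → ℝ,
    (∀ j, -(δ / 2) ≤ x j ∧ x j < δ / 2) ∧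
    (∀ j, -(δ / 2) ≤ y j ∧ y j < δ / 2) ∧ r = nrm (x - y)} with hSdef
  have hDS : cubeDiam n δ nrm = sSup S := rfl
  have hS0 : (0:ℝ) ∈ S := by
    refine ⟨0, 0, fun j => ⟨by simpa using hδ2.le, by simpa using hδ2⟩,
      fun j => ⟨by simpa using hδ2.le, by simpa using hδ2⟩, ?_⟩
    simp [hz]
  have hSbdd : BddAbove S := by
    refine ⟨δ * ∑ j : Fin n, nrm (fun k => if j = k then (1:ℝ) else 0), ?_⟩
    rintro r ⟨x, y, hx, hy, rfl⟩
    calc nrm (x - y) ≤ ∑ j : Fin n, |(x - y) j| * nrm (fun k => if j = k then (1:ℝ) else 0) :=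
          hcoordbound _
      _ ≤ ∑ j : Fin n, δ * nrm (fun k => if j = k then (1:ℝ) else 0) := by
          refine Finset.sum_le_sum fun j _ => ?_
          refine mul_le_mul_of_nonneg_right ?_ (hnn _)
          have h1 := (hx j).1; have h2 := (hx j).2
          have h3 := (hy j).1; have h4 := (hy j).2
          have : (x - y) j = x j - y j := rfl
          rw [this, abs_le]
          constructor <;> linarith
      _ = δ * ∑ j : Fin n, nrm (fun k => if j = k then (1:ℝ) else 0) := by
          rw [Finset.mul_sum]
  have hD0 : 0 ≤ sSup S := le_csSup hSbdd hS0
  have hθ0 : 0 ≤ θ := by rw [hθ, hDS]; linarith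
  -- roundoff error coordinates
  have hcoord : ∀ y : Fin n → ℝ, ∀ j,
      -(δ/2) ≤ (y - roundPt n δ y) j ∧ (y - roundPt n δ y) j < δ/2 := by
    intro y j
    have hq1 : (⌊y j / δ + 1/2⌋ : ℝ) ≤ y j / δ + 1/2 := Int.floor_le _
    have hq2 : y j / δ + 1/2 < (⌊y j / δ + 1/2⌋ : ℝ) + 1 := Int.lt_floor_add_one _
    have he : (y - roundPt n δ y) j = y j - δ * (⌊y j / δ + 1/2⌋ : ℝ) := by
      simp [roundPt, Pi.sub_apply]
    have hmul1 : δ * (⌊y j / δ + 1/2⌋ : ℝ) ≤ δ * (y j / δ + 1/2) :=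
      mul_le_mul_of_nonneg_left hq1 hδ.le
    have hmul2 : δ * (y j / δ + 1/2) < δ * ((⌊y j / δ + 1/2⌋ : ℝ) + 1) :=
      (mul_lt_mul_iff_right₀ hδ).mpr hq2
    have hdiv : δ * (y j / δ + 1/2) = y j + δ/2 := by
      field_simp
    rw [he]
    rw [hdiv] at hmul1 hmul2
    constructor <;> nlinarith
  -- roundoff error bound
  have herr : ∀ y : Fin n → ℝ, nrm (y - roundPt n δ y) ≤ θ := by
    intro y
    set e := y - roundPt n δ y with hedef
    set a := nrm e with hadef
    rcases le_or_gt (2 * a) (sSup S) with h | h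
    · rw [hθ, hDS]; linarith
    · exfalso
      have ha : 0 < a := by nlinarith
      set t : ℝ := (sSup S / (2*a) + 1)/2 with htdef
      have hq0 : 0 ≤ sSup S / (2*a) := div_nonneg hD0 (by linarith)
      have hq1 : sSup S / (2*a) < 1 := (div_lt_one (by linarith)).mpr h
      have ht0 : 0 ≤ t := by rw [htdef]; linarith
      have ht1 : t < 1 := by rw [htdef]; linarith
      have hqt : sSup S / (2*a) < t := by rw [htdef]; linarith
      have hmem : 2 * t * a ∈ S := by
        refine ⟨t • e, -(t • e), ?_, ?_, ?_⟩
        · intro j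
          have h1 := (hcoord y j).1
          have h2 := (hcoord y j).2
          have hte : (t • e) j = t * e j := rfl
          rw [hte]
          constructor <;> nlinarith
        · intro j
          have h1 := (hcoord y j).1
          have h2 := (hcoord y j).2
          have hte : (-(t • e)) j = -(t * e j) := rfl
          rw [hte]
          constructor <;> nlinarith
        · have h1 : t • e - -(t • e) = (2*t) • e := by
            rw [sub_neg_eq_add, ← two_smul ℝ, smul_smul]
          rw [h1, hnrm_smul, abs_of_nonneg (by linarith), ← hadef]
      have hle := le_csSup hSbdd hmem
      have heq : sSup S = (sSup S / (2*a)) * (2*a) := by field_simp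
      nlinarith
  -- roundPt lands in the grid
  have hgridRound : ∀ y : Fin n → ℝ, roundPt n δ y ∈ Dgrid n δ :=
    fun y => ⟨fun j => ⌊y j / δ + 1/2⌋, rfl⟩
  -- one-step estimate
  have hstep : ∀ z : Fin n → ℝ,
      nrm (roundMap n δ w z - xf) ≤ θ + lam * nrm (z - xf) := by
    intro z
    have h1 : roundMap n δ w z - xf = -(w z - roundPt n δ (w z)) + (w z - w xf) := by
      rw [hxf]; show roundPt n δ (w z) - xf = _; abel
    calc nrm (roundMap n δ w z - xf)
        = nrm (-(w z - roundPt n δ (w z)) + (w z - w xf)) := by rw [h1]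
      _ ≤ nrm (-(w z - roundPt n δ (w z))) + nrm (w z - w xf) := hnrm_add _ _
      _ ≤ θ + lam * nrm (z - xf) := by
          rw [hneg]
          exact add_le_add (herr (w z)) (hcontr z xf)
  set r₀ : ℝ := θ * (1 - lam)⁻¹ with hr0def
  have h1lam : (0:ℝ) < 1 - lam := by linarith [hlam.2]
  have hr₀0 : 0 ≤ r₀ := mul_nonneg hθ0 (inv_nonneg.mpr h1lam.le)
  have hkey : θ + lam * r₀ = r₀ := by
    rw [hr0def]
    field_simp
    ring
  have hinv : ∀ y : Fin n → ℝ, nrm (y - xf) ≤ r₀ →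
      nrm (roundMap n δ w y - xf) ≤ r₀ := by
    intro y hy
    have h1 := hstep y
    have h2 : lam * nrm (y - xf) ≤ lam * r₀ := mul_le_mul_of_nonneg_left hy hlam.1
    linarith
  -- iterate estimate
  have hiterGrid : ∀ x ∈ Dgrid n δ, ∀ i, (roundMap n δ w)^[i] x ∈ Dgrid n δ := by
    intro x hx i
    induction i with
    | zero => simpa using hx
    | succ i ih => rw [Function.iterate_succ_apply']; exact hgridRound _
  have hiter : ∀ x : Fin n → ℝ, ∀ i,
      nrm ((roundMap n δ w)^[i] x - xf) ≤ r₀ + lam ^ i * max (nrm (x - xf) - r₀) 0 := by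
    intro x i
    induction i with
    | zero =>
      simp only [Function.iterate_zero, id_eq, pow_zero, one_mul]
      linarith [le_max_left (nrm (x - xf) - r₀) 0]
    | succ i ih =>
      rw [Function.iterate_succ_apply']
      have h2 : lam * nrm ((roundMap n δ w)^[i] x - xf) ≤
          lam * (r₀ + lam ^ i * max (nrm (x - xf) - r₀) 0) :=
        mul_le_mul_of_nonneg_left ih hlam.1
      calc nrm (roundMap n δ w ((roundMap n δ w)^[i] x) - xf)
          ≤ θ + lam * nrm ((roundMap n δ w)^[i] x - xf) := hstep _
        _ ≤ θ + lam * (r₀ + lam ^ i * max (nrm (x - xf) - r₀) 0) := by linarith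
        _ = (θ + lam * r₀) + lam ^ (i+1) * max (nrm (x - xf) - r₀) 0 := by ring
        _ = r₀ + lam ^ (i+1) * max (nrm (x - xf) - r₀) 0 := by rw [hkey]
  -- coercivity of the abstract norm via finite dimensionality
  have coer : ∃ c : ℝ, 0 < c ∧ ∀ x : Fin n → ℝ, ∀ j, |x j| ≤ c * nrm x :=
    nrm_coercive nrm hnrm_eq hnrm_smul hnrm_add hnn hz hneg
  -- grid points close to xf form a finite set
  have hfin : {g ∈ Dgrid n δ | nrm (g - xf) ≤ r₀ + 1}.Finite := by
    obtain ⟨c, hc, hcoer⟩ := coer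
    set K : ℝ := c * (r₀ + 1) + ‖xf‖ with hKdef
    set B : ℤ := ⌊K / δ⌋ with hBdef
    have hfin2 : ((Set.univ : Set (Fin n)).pi
        (fun _ => (Set.Icc (-B) B : Set ℤ))).Finite :=
      Set.Finite.pi fun _ => Set.finite_Icc _ _
    refine Set.Finite.subset
      (hfin2.image (fun m : Fin n → ℤ => (fun j => δ * (m j : ℝ)))) ?_
    rintro g ⟨⟨m, hm⟩, hgle⟩
    refine ⟨m, ?_, hm.symm⟩
    intro j _
    simp only [Set.mem_Icc]
    have habs : |g j| ≤ K := by
      have h1 := hcoer (g - xf) j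
      have h4 : (g - xf) j = g j - xf j := rfl
      rw [h4] at h1
      have h2 : c * nrm (g - xf) ≤ c * (r₀ + 1) :=
        mul_le_mul_of_nonneg_left hgle hc.le
      have h3 : |xf j| ≤ ‖xf‖ := by
        simpa [Real.norm_eq_abs] using norm_le_pi_norm xf j
      have h5 : |g j| ≤ |g j - xf j| + |xf j| := by
        have := abs_add_le (g j - xf j) (xf j)
        simpa using this
      rw [hKdef]; linarith
    have hgj : g j = δ * (m j : ℝ) := by rw [hm]
    rw [hgj, abs_mul, abs_of_pos hδ] at habs
    have hmj : |(m j : ℝ)| ≤ K / δ := by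
      rw [le_div_iff₀ hδ]
      nlinarith [habs]
    constructor
    · rw [neg_le]
      refine Int.le_floor.mpr ?_
      push_cast
      calc (-(m j) : ℝ) ≤ |(m j : ℝ)| := by
            rw [← abs_neg]; exact le_abs_self _
        _ ≤ K / δ := hmj
    · refine Int.le_floor.mpr ?_
      exact le_trans (le_abs_self _) hmj
  -- a gap above r₀ among grid values
  have hgap : ∃ ε : ℝ, 0 < ε ∧ ε ≤ 1 ∧
      ∀ g ∈ Dgrid n δ, nrm (g - xf) ≤ r₀ + ε → nrm (g - xf) ≤ r₀ := by
    set T := {g ∈ Dgrid n δ | nrm (g - xf) ≤ r₀ + 1 ∧ r₀ < nrm (g - xf)} with hTdef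
    have hTfin : T.Finite := hfin.subset fun g hg => ⟨hg.1, hg.2.1⟩
    by_cases hne : T.Nonempty
    · obtain ⟨g₀, hg₀, hmin⟩ :=
        Set.exists_min_image T (fun g => nrm (g - xf)) hTfin hne
      have hg₀gt : r₀ < nrm (g₀ - xf) := hg₀.2.2
      refine ⟨min ((nrm (g₀ - xf) - r₀)/2) 1, lt_min (by linarith) one_pos,
        min_le_right _ _, ?_⟩
      intro g hg hle
      by_contra hgt
      push_neg at hgt
      have hle1 : nrm (g - xf) ≤ r₀ + 1 := by
        have := min_le_right ((nrm (g₀ - xf) - r₀)/2) 1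
        linarith
      have hgT : g ∈ T := ⟨hg, hle1, hgt⟩
      have h1 := hmin g hgT
      have h2 := min_le_left ((nrm (g₀ - xf) - r₀)/2) 1
      linarith
    · refine ⟨1, one_pos, le_refl 1, fun g hg hle => ?_⟩
      by_contra hgt
      push_neg at hgt
      exact hne ⟨g, hg, hle, hgt⟩
  -- assemble
  refine ⟨⟨?_, ?_⟩, ?_⟩
  · rw [hΛ]; exact fun y hy => hy.1
  · intro x hx
    obtain ⟨ε, hε, hε1, hgapp⟩ := hgap
    set M := max (nrm (x - xf) - r₀) 0 with hMdef
    have hM0 : 0 ≤ M := le_max_right _ _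
    have hev : ∃ N : ℕ, ∀ i ≥ N, lam ^ i * M ≤ ε := by
      rcases eq_or_lt_of_le hM0 with hM | hM
      · exact ⟨0, fun i _ => by rw [← hM, mul_zero]; exact hε.le⟩
      · have htend := tendsto_pow_atTop_nhds_zero_of_lt_one hlam.1 hlam.2
        have hevv : ∀ᶠ i in Filter.atTop, lam ^ i < ε / M :=
          htend.eventually_lt_const (by positivity)
        obtain ⟨N, hN⟩ := Filter.eventually_atTop.mp hevv
        refine ⟨N, fun i hi => ?_⟩
        have := hN i hi
        have h1 : lam ^ i * M ≤ (ε / M) * M :=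
          mul_le_mul_of_nonneg_right this.le hM0
        have h2 : (ε / M) * M = ε := by field_simp
        linarith
    obtain ⟨N, hN⟩ := hev
    refine ⟨N, fun i hi => ?_⟩
    rw [hΛ]
    have hgi : (roundMap n δ w)^[i] x ∈ Dgrid n δ := hiterGrid x hx i
    have hbound := hiter x i
    have hle : nrm ((roundMap n δ w)^[i] x - xf) ≤ r₀ + ε := by
      have := hN i hi
      rw [← hMdef] at hbound
      linarith
    exact ⟨hgi, hgapp _ hgi hle⟩
  · intro y hy
    rw [hΛ] at hy ⊢
    exact ⟨hgridRound _, hinv y hy.2⟩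
end
end

section
/- If w̃ : D^n(δ) → D^n(δ) is the δ-roundoff of a contraction w : ℝ^n → ℝ^n with respect to the metric d, with contraction factor λ ∈ [0, 1) and fixed point x_f, then the minimal absorbing set M[w̃] (in the whole space D^n(δ)) exists; moreover M[w̃] is finite and its cardinality is at most the cardinality of Λ(x_f, r_0) = {ỹ ∈ D^n(δ) : d(ỹ, x_f) ≤ θ(1 − λ)^{−1}}. -/
open Set

noncomputable section

/-- The intersection of all absorbing sets for `w` in `C`; it is called the
minimal absorbing set `M[w, C]` when it is itself absorbing in `C`. -/
def minAbsorbing {X : Type*} (w : X → X) (C : Set X) : Set X :=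
  ⋂₀ {Λ | IsAbsorbing w C Λ}

set_option maxHeartbeats 1000000 in
/-- for the δ-roundoff `w̃` of a contraction `w` (factor `λ ∈ [0,1)`,
fixed point `x_f`), the minimal absorbing set `M[w̃]` in the whole grid `D^n(δ)`
exists, is finite, and its cardinality is at most that of
`Λ(x_f, r₀) = {ỹ ∈ D^n(δ) : d(ỹ, x_f) ≤ θ(1-λ)⁻¹}`. -/
theorem stmt_5 (n : ℕ) (hn : 1 ≤ n) (δ : ℝ) (hδ : 0 < δ)
    (nrm : (Fin n → ℝ) → ℝ)
    (hnrm_eq : ∀ x, nrm x = 0 ↔ x = 0)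
    (hnrm_smul : ∀ (a : ℝ) (x : Fin n → ℝ), nrm (a • x) = |a| * nrm x)
    (hnrm_add : ∀ x y : Fin n → ℝ, nrm (x + y) ≤ nrm x + nrm y)
    (w : (Fin n → ℝ) → (Fin n → ℝ))
    (lam : ℝ) (hlam : lam ∈ Set.Ico (0 : ℝ) 1)
    (hcontr : ∀ x y : Fin n → ℝ, nrm (w x - w y) ≤ lam * nrm (x - y))
    (xf : Fin n → ℝ) (hxf : w xf = xf)
    (θ : ℝ) (hθ : θ = cubeDiam n δ nrm / 2) :
    IsAbsorbing (roundMap n δ w) (Dgrid n δ)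
        (minAbsorbing (roundMap n δ w) (Dgrid n δ)) ∧
      (minAbsorbing (roundMap n δ w) (Dgrid n δ)).Finite ∧
      (minAbsorbing (roundMap n δ w) (Dgrid n δ)).encard ≤
        {y ∈ Dgrid n δ | nrm (y - xf) ≤ θ * (1 - lam)⁻¹}.encard := by
  obtain ⟨hlam0, hlam1⟩ := hlam
  set F := roundMap n δ w with hF
  -- basic norm facts
  have nzero : nrm 0 = 0 := (hnrm_eq 0).2 rfl
  have nneg : ∀ x, nrm (-x) = nrm x := by
    intro x
    have h := hnrm_smul (-1) x
    simpa using h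
  have nnonneg : ∀ x, 0 ≤ nrm x := by
    intro x
    have h := hnrm_add x (-x)
    rw [add_neg_cancel, nzero, nneg] at h
    linarith
  have nsub : ∀ x y, nrm (x - y) = nrm (y - x) := by
    intro x y
    rw [← nneg (x - y), neg_sub]
  -- sum bound
  have nsum : ∀ (s : Finset (Fin n)) (f : Fin n → (Fin n → ℝ)),
      nrm (∑ j ∈ s, f j) ≤ ∑ j ∈ s, nrm (f j) := by
    intro s f
    induction s using Finset.cons_induction with
    | empty => simp [nzero]
    | cons a s ha ih =>
      rw [Finset.sum_cons, Finset.sum_cons]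
      exact le_trans (hnrm_add _ _) (by linarith)
  -- upper bound vs sup norm
  set Cn : ℝ := ∑ j : Fin n, nrm (fun i => if j = i then (1:ℝ) else 0) with hCn
  have hCn0 : 0 ≤ Cn := Finset.sum_nonneg fun j _ => nnonneg _
  have nupper : ∀ z, nrm z ≤ Cn * ‖z‖ := by
    intro z
    have hz : z = ∑ j : Fin n, (z j) • (fun i => if j = i then (1:ℝ) else 0) := by
      simpa using pi_eq_sum_univ z
    calc nrm z = nrm (∑ j : Fin n, (z j) • (fun i => if j = i then (1:ℝ) else 0)) := by
          rw [← hz]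
      _ ≤ ∑ j : Fin n, nrm ((z j) • (fun i => if j = i then (1:ℝ) else 0)) := nsum _ _
      _ ≤ ∑ j : Fin n, ‖z‖ * nrm (fun i => if j = i then (1:ℝ) else 0) := by
          refine Finset.sum_le_sum fun j _ => ?_
          rw [hnrm_smul]
          have h1 : |z j| ≤ ‖z‖ := by
            simpa [Real.norm_eq_abs] using norm_le_pi_norm z j
          exact mul_le_mul_of_nonneg_right h1 (nnonneg _)
      _ = Cn * ‖z‖ := by rw [← Finset.mul_sum, hCn, mul_comm]
  -- continuity of nrm
  have ncont : Continuous nrm := by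
    have hl : LipschitzWith (Real.toNNReal Cn) nrm := by
      apply LipschitzWith.of_dist_le_mul
      intro x y
      rw [Real.dist_eq, dist_eq_norm, Real.coe_toNNReal _ hCn0]
      have h1 : nrm x - nrm y ≤ nrm (x - y) := by
        have h := hnrm_add (x - y) y
        rw [sub_add_cancel] at h
        linarith
      have h2 : nrm y - nrm x ≤ nrm (x - y) := by
        have h := hnrm_add (y - x) x
        rw [sub_add_cancel, nsub y x] at h
        linarith
      have h3 := nupper (x - y)
      rw [abs_le]
      constructor <;> linarith
    exact hl.continuous
  -- lower bound via compactness of the sphere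
  haveI hnt : Nontrivial (Fin n → ℝ) := by
    refine ⟨0, Pi.single ⟨0, hn⟩ 1, fun h => ?_⟩
    have := congrFun h ⟨0, hn⟩
    simp [Pi.single_eq_same] at this
  obtain ⟨zmin, hzmem, hzmin⟩ :=
    (isCompact_sphere (0 : Fin n → ℝ) 1).exists_isMinOn
      (NormedSpace.sphere_nonempty.mpr zero_le_one) ncont.continuousOn
  set c : ℝ := nrm zmin with hc
  have hc0 : 0 < c := by
    have hzn : zmin ≠ 0 := by
      intro h
      rw [mem_sphere_iff_norm] at hzmem
      rw [h] at hzmem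
      simp at hzmem
    have : nrm zmin ≠ 0 := fun h => hzn ((hnrm_eq zmin).1 h)
    exact lt_of_le_of_ne (nnonneg _) (Ne.symm this)
  have nlower : ∀ z, c * ‖z‖ ≤ nrm z := by
    intro z
    rcases eq_or_ne z 0 with rfl | hz
    · simp [nzero]
    · have hzn : (0:ℝ) < ‖z‖ := norm_pos_iff.mpr hz
      have hu : (‖z‖⁻¹ • z) ∈ Metric.sphere (0 : Fin n → ℝ) 1 := by
        rw [mem_sphere_iff_norm, sub_zero, norm_smul, norm_inv, norm_norm]
        field_simp
      have hmin : c ≤ nrm (‖z‖⁻¹ • z) := hzmin hu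
      rw [hnrm_smul, abs_inv, abs_norm] at hmin
      calc c * ‖z‖ ≤ (‖z‖⁻¹ * nrm z) * ‖z‖ :=
            mul_le_mul_of_nonneg_right hmin (norm_nonneg _)
        _ = nrm z := by field_simp
  -- cubeDiam facts
  have hSbdd : BddAbove {r | ∃ x y : Fin n → ℝ,
      (∀ j, -(δ / 2) ≤ x j ∧ x j < δ / 2) ∧
      (∀ j, -(δ / 2) ≤ y j ∧ y j < δ / 2) ∧ r = nrm (x - y)} := by
    refine ⟨Cn * δ, ?_⟩
    rintro r ⟨x, y, hx, hy, rfl⟩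
    have hxn : ‖x‖ ≤ δ / 2 := by
      rw [pi_norm_le_iff_of_nonneg (by linarith)]
      intro j
      rw [Real.norm_eq_abs, abs_le]
      exact ⟨by linarith [(hx j).1], le_of_lt (hx j).2⟩
    have hyn : ‖y‖ ≤ δ / 2 := by
      rw [pi_norm_le_iff_of_nonneg (by linarith)]
      intro j
      rw [Real.norm_eq_abs, abs_le]
      exact ⟨by linarith [(hy j).1], le_of_lt (hy j).2⟩
    have h1 := nupper (x - y)
    have h2 : ‖x - y‖ ≤ δ := le_trans (norm_sub_le _ _) (by linarith)
    calc nrm (x - y) ≤ Cn * ‖x - y‖ := h1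
      _ ≤ Cn * δ := mul_le_mul_of_nonneg_left h2 hCn0
  have hD0 : 0 ≤ cubeDiam n δ nrm := by
    rw [cubeDiam]
    have hzcube : ∀ j : Fin n, -(δ/2) ≤ (0 : Fin n → ℝ) j ∧ (0 : Fin n → ℝ) j < δ/2 := by
      intro j
      simp only [Pi.zero_apply]
      constructor <;> linarith
    exact le_csSup hSbdd ⟨0, 0, hzcube, hzcube, by rw [sub_zero, nzero]⟩
  have hθ0 : 0 ≤ θ := by rw [hθ]; linarith
  -- roundoff error bound
  have hround : ∀ x, nrm (roundPt n δ x - x) ≤ θ := by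
    intro x
    set e := roundPt n δ x - x with he
    have hej : ∀ j, -(δ/2) < e j ∧ e j ≤ δ/2 := by
      intro j
      have hfl : ((⌊x j / δ + 1/2⌋ : ℤ) : ℝ) ≤ x j / δ + 1/2 := Int.floor_le _
      have hfl2 : x j / δ + 1/2 < (⌊x j / δ + 1/2⌋ : ℤ) + 1 := Int.lt_floor_add_one _
      have hd : x j / δ * δ = x j := div_mul_cancel₀ _ (ne_of_gt hδ)
      have hee : e j = δ * ((⌊x j / δ + 1/2⌋ : ℤ) : ℝ) - x j := rfl
      constructor
      · nlinarith [mul_lt_mul_of_pos_left hfl2 hδ]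
      · nlinarith [mul_le_mul_of_nonneg_left hfl (le_of_lt hδ)]
    have key : ∀ t : ℝ, 0 < t → t < 1 → 2 * t * nrm e ≤ cubeDiam n δ nrm := by
      intro t ht0 ht1
      rw [cubeDiam]
      apply le_csSup hSbdd
      refine ⟨(-t) • e, t • e, fun j => ?_, fun j => ?_, ?_⟩
      · obtain ⟨h1, h2⟩ := hej j
        constructor
        · show -(δ/2) ≤ -t * e j
          nlinarith
        · show -t * e j < δ/2
          nlinarith
      · obtain ⟨h1, h2⟩ := hej j
        constructor
        · show -(δ/2) ≤ t * e j
          nlinarith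
        · show t * e j < δ/2
          nlinarith
      · have hsub : (-t) • e - t • e = (-(2*t)) • e := by
          rw [← sub_smul]; ring_nf
        rw [hsub, hnrm_smul, abs_neg, abs_of_pos (by linarith)]
    by_cases hne : nrm e = 0
    · rw [hne]; exact hθ0
    · have hpos : 0 < nrm e := lt_of_le_of_ne (nnonneg e) (Ne.symm hne)
      have h2 : 2 * nrm e ≤ cubeDiam n δ nrm := by
        by_contra hcon
        push_neg at hcon
        set D := cubeDiam n δ nrm with hDdef
        have ht0 : 0 < (D + 2 * nrm e) / (4 * nrm e) := by positivity
        have ht1 : (D + 2 * nrm e) / (4 * nrm e) < 1 := by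
          rw [div_lt_one (by positivity)]
          linarith
        have hk := key _ ht0 ht1
        have heqv : 2 * ((D + 2 * nrm e) / (4 * nrm e)) * nrm e = (D + 2 * nrm e) / 2 := by
          field_simp
          ring
        rw [heqv] at hk
        linarith
      rw [hθ]; linarith
  -- one-step bound
  have hstep : ∀ x, nrm (F x - xf) ≤ θ + lam * nrm (x - xf) := by
    intro x
    have hdec : F x - xf = (roundPt n δ (w x) - w x) + (w x - w xf) := by
      rw [hxf]
      show roundPt n δ (w x) - xf = _
      ring
    rw [hdec]
    calc nrm _ ≤ nrm (roundPt n δ (w x) - w x) + nrm (w x - w xf) := hnrm_add _ _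
      _ ≤ θ + lam * nrm (x - xf) := add_le_add (hround _) (hcontr _ _)
  set r0 : ℝ := θ * (1 - lam)⁻¹ with hr0
  have hlamne : (1 : ℝ) - lam ≠ 0 := by linarith
  have hθr0 : θ = r0 * (1 - lam) := by
    rw [hr0]
    field_simp
  have hr0n : 0 ≤ r0 := mul_nonneg hθ0 (inv_nonneg.2 (by linarith))
  -- iterate bound
  have hiter : ∀ (x : Fin n → ℝ) (i : ℕ),
      nrm (F^[i] x - xf) ≤ lam ^ i * nrm (x - xf) + r0 := by
    intro x i
    induction i with
    | zero => simpa using by linarith [hr0n, nnonneg (x - xf)]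
    | succ i ih =>
      rw [Function.iterate_succ_apply']
      calc nrm (F (F^[i] x) - xf) ≤ θ + lam * nrm (F^[i] x - xf) := hstep _
        _ ≤ θ + lam * (lam ^ i * nrm (x - xf) + r0) := by
            exact add_le_add_right (mul_le_mul_of_nonneg_left ih hlam0) θ
        _ = lam ^ (i+1) * nrm (x - xf) + r0 := by rw [hθr0]; ring
  -- F maps into the grid
  have hFmem : ∀ x, F x ∈ Dgrid n δ := fun x =>
    ⟨fun j => ⌊w x j / δ + 1/2⌋, rfl⟩
  have hFiter : ∀ (x : Fin n → ℝ) (i : ℕ), 1 ≤ i → F^[i] x ∈ Dgrid n δ := by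
    intro x i hi
    obtain ⟨i, rfl⟩ := Nat.exists_eq_add_of_le hi
    rw [Function.iterate_add_apply]
    exact hFmem _
  -- finiteness of grid balls
  have hball_fin : ∀ R : ℝ, {y | y ∈ Dgrid n δ ∧ nrm (y - xf) ≤ R}.Finite := by
    intro R
    have hsub : {y | y ∈ Dgrid n δ ∧ nrm (y - xf) ≤ R} ⊆
        (fun m : Fin n → ℤ => fun j => δ * (m j : ℝ)) ''
          (Set.pi univ fun j => Set.Icc ⌈(xf j - R / c) / δ⌉ ⌊(xf j + R / c) / δ⌋) := by
      rintro y ⟨⟨m, rfl⟩, hy⟩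
      refine ⟨m, fun j _ => ?_, rfl⟩
      have h1 : c * ‖(fun j => δ * (m j : ℝ)) - xf‖ ≤ R := le_trans (nlower _) hy
      have h2 : ‖(fun j => δ * (m j : ℝ)) - xf‖ ≤ R / c := by
        rw [le_div_iff₀ hc0]; linarith
      have h3 : |δ * (m j : ℝ) - xf j| ≤ R / c := by
        have h4 := norm_le_pi_norm ((fun j => δ * (m j : ℝ)) - xf) j
        have h5 : ((fun j => δ * (m j : ℝ)) - xf) j = δ * (m j : ℝ) - xf j := rfl
        rw [h5, Real.norm_eq_abs] at h4
        exact le_trans h4 h2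
      rw [abs_le] at h3
      constructor
      · rw [Int.ceil_le, div_le_iff₀ hδ]
        nlinarith [h3.1]
      · rw [Int.le_floor, le_div_iff₀ hδ]
        nlinarith [h3.2]
    exact Set.Finite.subset
      (Set.Finite.image _ (Set.Finite.pi fun j => Set.finite_Icc _ _)) hsub
  have hBfin : {y | y ∈ Dgrid n δ ∧ nrm (y - xf) ≤ r0 + 1}.Finite := hball_fin (r0 + 1)
  -- the set of periodic points
  set P : Set (Fin n → ℝ) := {x | x ∈ Dgrid n δ ∧ ∃ k, 0 < k ∧ F^[k] x = x} with hP
  -- periodic-point iterate lemma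
  have hper : ∀ (p : Fin n → ℝ) (k : ℕ), F^[k] p = p → ∀ m : ℕ, F^[k * m] p = p := by
    intro p k hk m
    induction m with
    | zero => simp
    | succ m ih =>
      rw [Nat.mul_succ, Function.iterate_add_apply, hk, ih]
  -- P is absorbing
  have habs : ∀ x ∈ Dgrid n δ, ∃ N, ∀ i ≥ N, F^[i] x ∈ P := by
    intro x hx
    obtain ⟨N, hN⟩ : ∃ N : ℕ, ∀ i ≥ N, lam ^ i * nrm (x - xf) ≤ 1 := by
      have h := (tendsto_pow_atTop_nhds_zero_of_lt_one hlam0 hlam1).mul_const (nrm (x - xf))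
      rw [zero_mul] at h
      have h2 : ∀ᶠ i in Filter.atTop, lam ^ i * nrm (x - xf) ≤ 1 :=
        h.eventually (eventually_le_nhds (by norm_num))
      exact Filter.eventually_atTop.mp h2
    set M0 := max N 1 with hM0
    have hM01 : 1 ≤ M0 := le_max_right _ _
    have hB : ∀ i : ℕ, F^[M0 + i] x ∈ {y | y ∈ Dgrid n δ ∧ nrm (y - xf) ≤ r0 + 1} := by
      intro i
      refine ⟨hFiter x _ (le_trans hM01 (Nat.le_add_right _ _)), ?_⟩
      have h1 := hiter x (M0 + i)
      have h2 := hN (M0 + i) (le_trans (le_max_left _ _) (Nat.le_add_right _ _))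
      linarith
    obtain ⟨a, -, b, -, hab, heq⟩ :=
      Set.infinite_univ.exists_ne_map_eq_of_mapsTo
        (f := fun i : ℕ => F^[M0 + i] x) (fun i _ => hB i) hBfin
    -- wlog a < b
    rcases Ne.lt_or_gt hab with hlt | hlt
    case _ =>
      refine ⟨M0 + a, fun i hi => ?_⟩
      have hk : F^[b - a] (F^[M0 + a] x) = F^[M0 + a] x := by
        rw [← Function.iterate_add_apply]
        have : b - a + (M0 + a) = M0 + b := by omega
        rw [this, ← heq]
      -- F^[i] x = F^[i - (M0+a)] (F^[M0+a] x), which is periodic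
      have hdecomp : F^[i] x = F^[i - (M0 + a)] (F^[M0 + a] x) := by
        rw [← Function.iterate_add_apply]
        congr 1
        omega
      refine ⟨hFiter x i (le_trans (le_trans hM01 (Nat.le_add_right _ _)) hi), b - a, by omega, ?_⟩
      rw [hdecomp, ← Function.iterate_add_apply, add_comm, Function.iterate_add_apply, hk]
    case _ =>
      refine ⟨M0 + b, fun i hi => ?_⟩
      have hk : F^[a - b] (F^[M0 + b] x) = F^[M0 + b] x := by
        rw [← Function.iterate_add_apply]
        have : a - b + (M0 + b) = M0 + a := by omega
        rw [this, heq]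
      have hdecomp : F^[i] x = F^[i - (M0 + b)] (F^[M0 + b] x) := by
        rw [← Function.iterate_add_apply]
        congr 1
        omega
      refine ⟨hFiter x i (le_trans (le_trans hM01 (Nat.le_add_right _ _)) hi), a - b, by omega, ?_⟩
      rw [hdecomp, ← Function.iterate_add_apply, add_comm, Function.iterate_add_apply, hk]
  have hPabs : IsAbsorbing F (Dgrid n δ) P := ⟨fun p hp => hp.1, habs⟩
  -- P is contained in every absorbing set
  have hPsub : ∀ Λ, IsAbsorbing F (Dgrid n δ) Λ → P ⊆ Λ := by
    rintro Λ ⟨hΛsub, hΛabs⟩ p ⟨hpg, k, hk, hpk⟩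
    obtain ⟨N, hN⟩ := hΛabs p hpg
    have h1 : F^[k * N] p = p := hper p k hpk N
    have h2 : N ≤ k * N := Nat.le_mul_of_pos_left N hk
    have := hN (k * N) h2
    rwa [h1] at this
  -- minAbsorbing = P
  have hMP : minAbsorbing F (Dgrid n δ) = P := by
    apply Set.Subset.antisymm
    · exact Set.sInter_subset_of_mem hPabs
    · intro p hp
      exact Set.mem_sInter.2 fun Λ hΛ => hPsub Λ hΛ hp
  -- P is inside the r0-ball
  have hPball : P ⊆ {y ∈ Dgrid n δ | nrm (y - xf) ≤ θ * (1 - lam)⁻¹} := by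
    rintro p ⟨hpg, k, hk, hpk⟩
    refine ⟨hpg, ?_⟩
    have hlamk : lam ^ k < 1 := pow_lt_one₀ hlam0 hlam1 (by omega : k ≠ 0)
    have hlamk0 : 0 ≤ lam ^ k := pow_nonneg hlam0 k
    have htend : Filter.Tendsto (fun m : ℕ => (lam ^ k) ^ m * nrm (p - xf) + r0)
        Filter.atTop (nhds r0) := by
      have h := (tendsto_pow_atTop_nhds_zero_of_lt_one hlamk0 hlamk).mul_const (nrm (p - xf))
      rw [zero_mul] at h
      simpa using h.add_const r0
    have hge : ∀ m : ℕ, nrm (p - xf) ≤ (lam ^ k) ^ m * nrm (p - xf) + r0 := by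
      intro m
      have h1 := hiter p (k * m)
      rw [hper p k hpk m] at h1
      rw [← pow_mul]
      exact h1
    exact ge_of_tendsto' htend hge
  refine ⟨?_, ?_, ?_⟩
  · rw [hMP]; exact hPabs
  · rw [hMP]
    refine hBfin.subset ?_
    intro p hp
    obtain ⟨h1, h2⟩ := hPball hp
    exact ⟨h1, by linarith⟩
  · rw [hMP]
    exact Set.encard_mono hPball
end
end

section
/- Let V^(k) be a linear subspace of ℝ^n spanned by k distinct standard basis vectors of ℝ^n, with 0 < k < n. Let x̃, õ ∈ D^n(δ) with x̃ ∈ õ + V^(k). Then for every point x in the δ-cube C_δ(x̃/δ) (the δ-cube whose center is x̃), d_E(x, õ) ≥ d_E(x̃, õ) − δ√k/2. -/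
open Set

noncomputable section

/-- The Euclidean metric on `ℝⁿ = Fin n → ℝ`. -/
def dE (n : ℕ) (x y : Fin n → ℝ) : ℝ :=
  Real.sqrt (∑ j, (x j - y j) ^ 2)

lemma dE_eq_dist (n : ℕ) (u v : Fin n → ℝ) :
    dE n u v = dist ((WithLp.equiv 2 (Fin n → ℝ)).symm u)
      ((WithLp.equiv 2 (Fin n → ℝ)).symm v) := by
  rw [EuclideanSpace.dist_eq]
  simp [dE, Real.dist_eq, sq_abs]

lemma dE_triangle (n : ℕ) (a b c : Fin n → ℝ) : dE n a c ≤ dE n a b + dE n b c := by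
  rw [dE_eq_dist, dE_eq_dist, dE_eq_dist]
  exact dist_triangle _ _ _

/-- let `V^(k)` be the span of `k` distinct standard basis vectors
(given by a set `s` of coordinates, `|s| = k`, `0 < k < n`), and let
`x̃, õ ∈ D^n(δ)` with `x̃ ∈ õ + V^(k)` (i.e. `x̃` and `õ` agree off `s`).  Then every
point `x` of the δ-cube centered at `x̃` satisfies
`d_E(x, õ) ≥ d_E(x̃, õ) - δ√k/2`. -/
theorem stmt_7 (n : ℕ) (hn : 1 ≤ n) (δ : ℝ) (hδ : 0 < δ)
    (k : ℕ) (hk1 : 0 < k) (hk2 : k < n)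
    (s : Finset (Fin n)) (hs : s.card = k)
    (xt o : Fin n → ℝ) (hxt : xt ∈ Dgrid n δ) (ho : o ∈ Dgrid n δ)
    (hmem : ∀ j ∉ s, xt j = o j)
    (x : Fin n → ℝ) (hx : ∀ j, xt j - δ / 2 ≤ x j ∧ x j < xt j + δ / 2) :
    dE n xt o - δ * Real.sqrt k / 2 ≤ dE n x o := by
  set y : Fin n → ℝ := fun j => if j ∈ s then x j else xt j with hy
  have h1 : dE n y o ≤ dE n x o := by
    apply Real.sqrt_le_sqrt
    apply Finset.sum_le_sum
    intro j _
    by_cases hj : j ∈ s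
    · simp [hy, hj]
    · simpa [hy, hj, hmem j hj] using sq_nonneg (x j - o j)
  have h2 : dE n xt y ≤ δ * Real.sqrt k / 2 := by
    have hsum : ∑ j, (xt j - y j) ^ 2 ≤ (k : ℝ) * (δ / 2) ^ 2 := by
      calc ∑ j, (xt j - y j) ^ 2 = ∑ j ∈ s, (xt j - x j) ^ 2 := by
            rw [← Finset.sum_subset (Finset.subset_univ s)]
            · exact Finset.sum_congr rfl fun j hj => by simp [hy, hj]
            · intro j _ hj; simp [hy, hj]
        _ ≤ ∑ _j ∈ s, (δ / 2) ^ 2 := by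
            apply Finset.sum_le_sum
            intro j hj
            have h := hx j
            apply sq_le_sq' <;> linarith [h.1, h.2]
        _ = (k : ℝ) * (δ / 2) ^ 2 := by
            rw [Finset.sum_const, hs, nsmul_eq_mul]
    calc dE n xt y ≤ Real.sqrt ((k : ℝ) * (δ / 2) ^ 2) := Real.sqrt_le_sqrt hsum
      _ = δ * Real.sqrt k / 2 := by
          rw [Real.sqrt_mul (by positivity), Real.sqrt_sq (by positivity)]
          ring
  have h3 := dE_triangle n xt y o
  linarith
end
end

section
/- Let w : ℝ^n → ℝ^n be a contraction with respect to the Euclidean metric d_E, with contraction factor λ < 1/2, whose fixed point x_f coincides with a point õ ∈ D^n(δ) (the center of a δ-cube). Then the minimal absorbing set of the δ-roundoff w̃ is the singleton M[w̃] = {õ}. -/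
open Set

noncomputable section

-- rounding a grid point gives itself
lemma roundPt_grid (n : ℕ) (δ : ℝ) (hδ : 0 < δ) (x : Fin n → ℝ)
    (hx : x ∈ Dgrid n δ) : roundPt n δ x = x := by
  obtain ⟨m, rfl⟩ := hx
  funext j
  have : δ * (m j : ℝ) / δ = (m j : ℝ) := by field_simp
  simp only [roundPt, this]
  have hf : ⌊(m j : ℝ) + 1/2⌋ = m j := by
    rw [add_comm, Int.floor_add_intCast]
    norm_num
  rw [hf]

-- rounding error per coordinate ≤ δ/2
lemma round_err (δ : ℝ) (hδ : 0 < δ) (y : ℝ) :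
    |δ * (⌊y / δ + 1/2⌋ : ℤ) - y| ≤ δ / 2 := by
  have h1 : (⌊y / δ + 1/2⌋ : ℝ) ≤ y / δ + 1/2 := Int.floor_le _
  have h2 : y / δ + 1/2 - 1 < (⌊y / δ + 1/2⌋ : ℝ) := Int.sub_one_lt_floor _
  have hy : δ * (y / δ) = y := by field_simp
  rw [abs_le]
  constructor
  · nlinarith [mul_lt_mul_of_pos_left h2 hδ]
  · nlinarith [mul_le_mul_of_nonneg_left h1 hδ.le]

-- coordinatewise: |round y j - o j| ≤ 2 |y j - o j| for grid o
lemma round_coord (n : ℕ) (δ : ℝ) (hδ : 0 < δ) (y : Fin n → ℝ)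
    (m : Fin n → ℤ) (j : Fin n) :
    |roundPt n δ y j - δ * (m j : ℝ)| ≤ 2 * |y j - δ * (m j : ℝ)| := by
  set k : ℤ := ⌊y j / δ + 1/2⌋ - m j with hk
  have hrep : roundPt n δ y j - δ * (m j : ℝ) = δ * (k : ℝ) := by
    simp only [roundPt, hk]; push_cast; ring
  rcases eq_or_ne k 0 with h0 | h0
  · rw [hrep, h0]
    simp only [Int.cast_zero, mul_zero, abs_zero]
    positivity
  · have hk1 : (1 : ℝ) ≤ |(k : ℝ)| := by
      have : (1 : ℤ) ≤ |k| := Int.one_le_abs h0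
      calc (1:ℝ) ≤ (|k| : ℤ) := by exact_mod_cast this
        _ = |(k:ℝ)| := by push_cast; rfl
    have herr := round_err δ hδ (y j)
    have htri : |δ * (k:ℝ)| ≤ |roundPt n δ y j - y j| + |y j - δ * (m j : ℝ)| := by
      rw [← hrep]
      calc |roundPt n δ y j - δ * (m j : ℝ)|
          = |(roundPt n δ y j - y j) + (y j - δ * (m j : ℝ))| := by ring_nf
        _ ≤ _ := abs_add_le _ _
    have herr' : |roundPt n δ y j - y j| ≤ δ / 2 := herr
    have habs : |δ * (k:ℝ)| = δ * |(k:ℝ)| := by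
      rw [abs_mul, abs_of_pos hδ]
    have hge : δ * |(k:ℝ)| / 2 ≤ |y j - δ * (m j : ℝ)| := by
      nlinarith [abs_nonneg (y j - δ * (m j : ℝ))]
    rw [hrep, habs]
    nlinarith

lemma dE_nonneg (n : ℕ) (x y : Fin n → ℝ) : 0 ≤ dE n x y := Real.sqrt_nonneg _

-- dE monotone w.r.t. coordinatewise |·|
lemma dE_round_le (n : ℕ) (δ : ℝ) (hδ : 0 < δ) (y o : Fin n → ℝ)
    (hog : o ∈ Dgrid n δ) : dE n (roundPt n δ y) o ≤ 2 * dE n y o := by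
  obtain ⟨m, rfl⟩ := hog
  have hsum : ∑ j, (roundPt n δ y j - δ * (m j : ℝ)) ^ 2
      ≤ ∑ j, (2 * (y j - δ * (m j : ℝ))) ^ 2 := by
    apply Finset.sum_le_sum
    intro j _
    have := round_coord n δ hδ y m j
    have h2 : (roundPt n δ y j - δ * (m j : ℝ))^2 ≤ (2 * |y j - δ * (m j : ℝ)|)^2 := by
      rw [← sq_abs (roundPt n δ y j - δ * (m j : ℝ))]
      exact pow_le_pow_left₀ (abs_nonneg _) this 2
    simpa [mul_pow, sq_abs] using h2
  calc dE n (roundPt n δ y) (fun j => δ * (m j : ℝ))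
      ≤ Real.sqrt (∑ j, (2 * (y j - δ * (m j : ℝ))) ^ 2) := Real.sqrt_le_sqrt hsum
    _ = 2 * dE n y (fun j => δ * (m j : ℝ)) := by
        rw [dE]
        rw [show ∑ j, (2 * (y j - δ * (m j : ℝ))) ^ 2
            = 4 * ∑ j, (y j - δ * (m j : ℝ)) ^ 2 by
          rw [Finset.mul_sum]; congr 1; funext j; ring]
        rw [Real.sqrt_mul (by norm_num)]
        rw [show (4:ℝ) = 2^2 by norm_num, Real.sqrt_sq (by norm_num : (0:ℝ) ≤ 2)]

-- grid points distinct ⇒ dE ≥ δ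
lemma grid_sep (n : ℕ) (δ : ℝ) (hδ : 0 < δ) (x o : Fin n → ℝ)
    (hx : x ∈ Dgrid n δ) (ho : o ∈ Dgrid n δ) (hne : x ≠ o) :
    δ ≤ dE n x o := by
  obtain ⟨m, rfl⟩ := hx
  obtain ⟨m', rfl⟩ := ho
  have : ∃ j, m j ≠ m' j := by
    by_contra h
    push_neg at h
    exact hne (by funext j; rw [h j])
  obtain ⟨j, hj⟩ := this
  have h1 : δ ≤ |δ * (m j : ℝ) - δ * (m' j : ℝ)| := by
    have : δ * (m j : ℝ) - δ * (m' j : ℝ) = δ * ((m j - m' j : ℤ) : ℝ) := by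
      push_cast; ring
    rw [this, abs_mul, abs_of_pos hδ]
    have : (1:ℝ) ≤ |((m j - m' j : ℤ) : ℝ)| := by
      have : (1:ℤ) ≤ |m j - m' j| := Int.one_le_abs (sub_ne_zero.mpr hj)
      calc (1:ℝ) ≤ (|m j - m' j| : ℤ) := by exact_mod_cast this
        _ = _ := by push_cast; rfl
    nlinarith
  have h2 : |δ * (m j : ℝ) - δ * (m' j : ℝ)| ≤ dE n (fun j => δ * (m j:ℝ)) (fun j => δ * (m' j:ℝ)) := by
    rw [dE, ← Real.sqrt_sq_eq_abs]
    apply Real.sqrt_le_sqrt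
    exact Finset.single_le_sum (f := fun i => (δ * (m i:ℝ) - δ * (m' i:ℝ))^2)
      (fun i _ => sq_nonneg _) (Finset.mem_univ j)
  linarith


/-- if `w` is a contraction w.r.t. the Euclidean metric with factor
`λ < 1/2` whose fixed point coincides with a grid point `õ ∈ D^n(δ)`, then the
minimal absorbing set of its δ-roundoff `w̃` is the singleton `{õ}`. -/
theorem stmt_8 (n : ℕ) (hn : 1 ≤ n) (δ : ℝ) (hδ : 0 < δ)
    (w : (Fin n → ℝ) → (Fin n → ℝ))
    (lam : ℝ) (hlam0 : 0 ≤ lam) (hlam : lam < 1 / 2)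
    (hcontr : ∀ x y : Fin n → ℝ, dE n (w x) (w y) ≤ lam * dE n x y)
    (o : Fin n → ℝ) (hog : o ∈ Dgrid n δ) (hfix : w o = o) :
    IsAbsorbing (roundMap n δ w) (Dgrid n δ) {o} ∧
      minAbsorbing (roundMap n δ w) (Dgrid n δ) = {o} := by
  set f := roundMap n δ w with hf
  have hgo : f o = o := by
    rw [hf, roundMap, hfix, roundPt_grid n δ hδ o hog]
  have hiter_fix : ∀ i, f^[i] o = o := fun i => Function.iterate_fixed hgo i
  have hgrid : ∀ x, f x ∈ Dgrid n δ := fun x => ⟨_, rfl⟩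
  have hkey : ∀ x, dE n (f x) o ≤ (2 * lam) * dE n x o := by
    intro x
    calc dE n (f x) o ≤ 2 * dE n (w x) o := dE_round_le n δ hδ (w x) o hog
      _ = 2 * dE n (w x) (w o) := by rw [hfix]
      _ ≤ 2 * (lam * dE n x o) := by have := hcontr x o; linarith
      _ = (2 * lam) * dE n x o := by ring
  have hiterbound : ∀ (x : Fin n → ℝ) (i : ℕ),
      dE n (f^[i] x) o ≤ (2 * lam) ^ i * dE n x o := by
    intro x i
    induction i with
    | zero => simp
    | succ i ih =>
      rw [Function.iterate_succ_apply']
      calc dE n (f (f^[i] x)) o ≤ (2 * lam) * dE n (f^[i] x) o := hkey _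
        _ ≤ (2 * lam) * ((2 * lam) ^ i * dE n x o) :=
            mul_le_mul_of_nonneg_left ih (by linarith)
        _ = (2 * lam) ^ (i + 1) * dE n x o := by ring
  have hitergrid : ∀ (x : Fin n → ℝ), x ∈ Dgrid n δ → ∀ i, f^[i] x ∈ Dgrid n δ := by
    intro x hx i
    induction i with
    | zero => simpa using hx
    | succ i ih => rw [Function.iterate_succ_apply']; exact hgrid _
  have habs : IsAbsorbing f (Dgrid n δ) {o} := by
    constructor
    · exact singleton_subset_iff.mpr hog
    · intro x hx
      set d := dE n x o with hd
      have hd0 : 0 ≤ d := dE_nonneg n x o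
      have h2lam : 2 * lam < 1 := by linarith
      have h2lam0 : 0 ≤ 2 * lam := by linarith
      obtain ⟨N, hN⟩ := exists_pow_lt_of_lt_one
        (show (0:ℝ) < δ / (d + 1) by positivity) h2lam
      refine ⟨N, fun i hi => ?_⟩
      have hpow : (2 * lam) ^ i ≤ (2 * lam) ^ N :=
        pow_le_pow_of_le_one h2lam0 (by linarith) hi
      have hpos : (0:ℝ) ≤ (2 * lam) ^ N := pow_nonneg h2lam0 N
      have hlt : dE n (f^[i] x) o < δ := by
        have h1 : dE n (f^[i] x) o ≤ (2 * lam) ^ i * d := hiterbound x i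
        have h2 : (2 * lam) ^ i * d ≤ (2 * lam) ^ N * d :=
          mul_le_mul_of_nonneg_right hpow hd0
        have h3 : (2 * lam) ^ N * d ≤ (2 * lam) ^ N * (d + 1) := by nlinarith
        have h4 : (2 * lam) ^ N * (d + 1) < (δ / (d + 1)) * (d + 1) := by
          apply mul_lt_mul_of_pos_right hN (by linarith)
        have h5 : (δ / (d + 1)) * (d + 1) = δ := by field_simp
        linarith
      have : f^[i] x = o := by
        by_contra hne
        have := grid_sep n δ hδ (f^[i] x) o (hitergrid x hx i) hog hne
        linarith
      simpa using this
  refine ⟨habs, ?_⟩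
  apply subset_antisymm
  · exact sInter_subset_of_mem habs
  · intro x hx
    rw [mem_singleton_iff] at hx
    subst hx
    intro Λ hΛ
    obtain ⟨hsub, hab⟩ := hΛ
    obtain ⟨N, hN⟩ := hab x hog
    have := hN N le_rfl
    rwa [hiter_fix N] at this
end
end

section
/- Let w̃_1, …, w̃_N : S → S be a DIFS on S ⊂ D^n(δ), and let I ⊂ {1, …, N} be a nonempty set of indices i for which the minimal absorbing set M[w̃_i, S] exists. Let {A_k} be any family of pairwise disjoint nonempty subsets of S, each satisfying ∪_{j=1}^N w̃_j(A_k) ⊂ A_k. Then the cardinality of the family {A_k} is at most min_{i ∈ I} M_#[w̃_i, S], where M_#[w̃_i, S] denotes the number of components of M[w̃_i, S]. -/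
open Set

noncomputable section

/-- The components of the minimal absorbing set `M[w, S]`: the equivalence classes
of the orbit-coincidence relation `x ∼ y ↔ ∃ j k, w^[j] x = w^[k] y` on `M[w, S]`. -/
def components {X : Type*} (w : X → X) (S : Set X) : Set (Set X) :=
  {K | ∃ x₀ ∈ minAbsorbing w S,
    K = {y ∈ minAbsorbing w S | ∃ j k : ℕ, w^[j] y = w^[k] x₀}}

/-- for a DIFS `w̃₁, …, w̃_N : S → S` on `S ⊆ D^n(δ)` and a nonempty
set `I` of indices for which the minimal absorbing sets exist, every family of
pairwise disjoint nonempty subsets of `S`, each closed under all the maps `w̃ⱼ`, has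
cardinality at most `minᵢ∈I M_#[w̃ᵢ, S]`, the minimum number of components. -/
theorem stmt_14 (n : ℕ) (hn : 1 ≤ n) (δ : ℝ) (hδ : 0 < δ)
    (S : Set (Fin n → ℝ)) (hS : S ⊆ Dgrid n δ)
    (N : ℕ) (hN : 0 < N)
    (w : Fin N → (Fin n → ℝ) → (Fin n → ℝ))
    (hw : ∀ i, ∀ x ∈ S, w i x ∈ S)
    (I : Finset (Fin N)) (hI : I.Nonempty)
    (hmin : ∀ i ∈ I, IsAbsorbing (w i) S (minAbsorbing (w i) S))
    (𝒜 : Set (Set (Fin n → ℝ)))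
    (h𝒜 : ∀ A ∈ 𝒜, A ⊆ S ∧ A.Nonempty ∧ ∀ j, w j '' A ⊆ A)
    (hdisj : 𝒜.Pairwise Disjoint) :
    ∀ i ∈ I, 𝒜.encard ≤ (components (w i) S).encard := by
  intro i hi
  classical
  set M := minAbsorbing (w i) S with hM
  obtain ⟨hMS, habs⟩ := hmin i hi
  -- every A ∈ 𝒜 is closed under iterates of w i
  have hiter : ∀ A ∈ 𝒜, ∀ x ∈ A, ∀ m : ℕ, (w i)^[m] x ∈ A := by
    intro A hA x hx m
    induction m with
    | zero => simpa using hx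
    | succ m ih =>
      rw [Function.iterate_succ_apply']
      exact (h𝒜 A hA).2.2 i ⟨_, ih, rfl⟩
  -- choose a point of A ∩ M for every A ∈ 𝒜
  have hpick : ∀ A : Set (Fin n → ℝ), ∃ p, A ∈ 𝒜 → p ∈ A ∩ M := by
    intro A
    by_cases hA : A ∈ 𝒜
    · obtain ⟨hAS, ⟨x, hx⟩, _⟩ := h𝒜 A hA
      obtain ⟨N₀, hN₀⟩ := habs x (hAS hx)
      exact ⟨(w i)^[N₀] x, fun _ => ⟨hiter A hA x hx N₀, hN₀ N₀ le_rfl⟩⟩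
    · exact ⟨Classical.arbitrary _, fun h => absurd h hA⟩
  choose y hy using hpick
  set F : Set (Fin n → ℝ) → Set (Fin n → ℝ) :=
    fun A => {z ∈ M | ∃ j k : ℕ, (w i)^[j] z = (w i)^[k] (y A)} with hF
  have hyA : ∀ A ∈ 𝒜, y A ∈ F A := by
    intro A hA
    exact ⟨(hy A hA).2, 0, 0, rfl⟩
  have himg : F '' 𝒜 ⊆ components (w i) S := by
    rintro _ ⟨A, hA, rfl⟩
    exact ⟨y A, (hy A hA).2, rfl⟩
  have hinj : Set.InjOn F 𝒜 := by
    intro A hA B hB hFAB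
    by_contra hne
    have hd := hdisj hA hB hne
    have hyAB : y A ∈ F B := hFAB ▸ hyA A hA
    obtain ⟨_, j, k, hjk⟩ := hyAB
    have h1 : (w i)^[j] (y A) ∈ A := hiter A hA _ (hy A hA).1 j
    have h2 : (w i)^[k] (y B) ∈ B := hiter B hB _ (hy B hB).1 k
    exact (hd.ne_of_mem h1 h2) hjk
  calc 𝒜.encard = (F '' 𝒜).encard := (hinj.encard_image).symm
    _ ≤ (components (w i) S).encard := Set.encard_mono himg
end
end

section
/- Let w̃_1, …, w̃_N : S → S be a DIFS on S ⊂ D^n(δ), and let I ⊂ {1, …, N} be a nonempty set of indices i for which the minimal absorbing set M[w̃_i, S] exists. Suppose that for some i, j ∈ I and some component M_k[w̃_j, S] of M[w̃_j, S], the whole minimal absorbing set M[w̃_i, S] is contained in the basin of attraction B[M_k[w̃_j, S]]. Then any family of pairwise disjoint nonempty subsets of S, each closed under all the maps w̃_1, …, w̃_N (i.e., each A satisfies ∪_{l=1}^N w̃_l(A) ⊂ A), contains at most one set. -/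
open Set

noncomputable section

/-- for a DIFS `w̃₁, …, w̃_N : S → S` on `S ⊆ D^n(δ)`, if for some
`i, j ∈ I` (indices whose minimal absorbing sets exist) the whole set `M[w̃ᵢ, S]` is
contained in the basin of attraction of one component `K` of `M[w̃ⱼ, S]`, then any
family of pairwise disjoint nonempty subsets of `S`, each closed under all the maps
`w̃₁, …, w̃_N`, contains at most one set. -/
theorem stmt_15 (n : ℕ) (hn : 1 ≤ n) (δ : ℝ) (hδ : 0 < δ)
    (S : Set (Fin n → ℝ)) (hS : S ⊆ Dgrid n δ)
    (N : ℕ) (hN : 0 < N)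
    (w : Fin N → (Fin n → ℝ) → (Fin n → ℝ))
    (hw : ∀ i, ∀ x ∈ S, w i x ∈ S)
    (I : Finset (Fin N)) (hI : I.Nonempty)
    (hmin : ∀ i ∈ I, IsAbsorbing (w i) S (minAbsorbing (w i) S))
    (i j : Fin N) (hi : i ∈ I) (hj : j ∈ I)
    (K : Set (Fin n → ℝ)) (hK : K ∈ components (w j) S)
    (hbasin : minAbsorbing (w i) S ⊆ {x ∈ S | ∃ m : ℕ, (w j)^[m] x ∈ K})
    (𝒜 : Set (Set (Fin n → ℝ)))
    (h𝒜 : ∀ A ∈ 𝒜, A ⊆ S ∧ A.Nonempty ∧ ∀ l, w l '' A ⊆ A)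
    (hdisj : 𝒜.Pairwise Disjoint) :
    𝒜.encard ≤ 1 := by

  -- iterates stay in a closed set
  have hiter : ∀ A ∈ 𝒜, ∀ l : Fin N, ∀ m : ℕ, ∀ x ∈ A, (w l)^[m] x ∈ A := by
    intro A hA l m
    induction m with
    | zero => intro x hx; simpa using hx
    | succ m ih =>
      intro x hx
      rw [Function.iterate_succ_apply']
      exact (h𝒜 A hA).2.2 l ⟨_, ih x hx, rfl⟩
  obtain ⟨x₀, hx₀, rfl⟩ := hK
  -- every A ∈ 𝒜 meets K
  have key : ∀ A ∈ 𝒜, ∃ a ∈ A, a ∈ minAbsorbing (w j) S ∧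
      ∃ p q : ℕ, (w j)^[p] a = (w j)^[q] x₀ := by
    intro A hA
    obtain ⟨hAS, ⟨a₀, ha₀⟩, hcl⟩ := h𝒜 A hA
    obtain ⟨M, hM⟩ := (hmin i hi).2 a₀ (hAS ha₀)
    have ha₁ : (w i)^[M] a₀ ∈ minAbsorbing (w i) S := hM M le_rfl
    obtain ⟨-, m, hm⟩ := hbasin ha₁
    exact ⟨(w j)^[m] ((w i)^[M] a₀), hiter A hA j m _ (hiter A hA i M _ ha₀),
      hm.1, hm.2⟩
  rw [Set.encard_le_one_iff]
  intro A B hA hB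
  by_contra hne
  obtain ⟨a, haA, -, p, q, hpq⟩ := key A hA
  obtain ⟨b, hbB, -, r, s, hrs⟩ := key B hB
  have : (w j)^[s + p] a = (w j)^[q + r] b := by
    rw [Function.iterate_add_apply, Function.iterate_add_apply, hpq, hrs,
      ← Function.iterate_add_apply, ← Function.iterate_add_apply, Nat.add_comm]
  exact (hdisj hA hB hne).le_bot ⟨hiter A hA j (s + p) a haA,
    this ▸ hiter B hB j (q + r) b hbB⟩
end
end

section
/- Let w_1, …, w_N : ℝ^n → ℝ^n be contractions with respect to the metric d, with fixed points x_f^{(1)}, …, x_f^{(N)} and contraction factors λ_1, …, λ_N ∈ [0, 1), and let w̃_1, …, w̃_N be their δ-roundoffs. Let o ∈ ℝ^n, and set r_max = max_i d(x_f^{(i)}, o), λ_max = max_i λ_i, α = (1 + λ_max)/(1 − λ_max), and r = α·r_max + θ(1 − λ_max)^{−1}. Then for every ε > 0, the set S = B(o, r + ε) ∩ D^n(δ), where B(o, r + ε) is the open d-ball of radius r + ε centered at o, satisfies w̃_i(S) ⊂ S for every i ∈ {1, …, N}; moreover, the minimal absorbing set M[w̃_i] is contained in S for every i. -/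
open Set

noncomputable section

set_option maxHeartbeats 1000000

/-- for contractions `w₁, …, w_N` with fixed points `x_f⁽ⁱ⁾`, factors
`λᵢ ∈ [0,1)`, any `o ∈ ℝⁿ`, `r_max = maxᵢ d(x_f⁽ⁱ⁾, o)`, `λ_max = maxᵢ λᵢ`,
`α = (1+λ_max)/(1-λ_max)` and `r = α r_max + θ(1-λ_max)⁻¹`: for every `ε > 0` the
set `S = B(o, r+ε) ∩ D^n(δ)` satisfies `w̃ᵢ(S) ⊆ S` for every `i`, and moreover the
minimal absorbing set `M[w̃ᵢ]` is contained in `S` for every `i`. -/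
theorem stmt_16 (n : ℕ) (hn : 1 ≤ n) (δ : ℝ) (hδ : 0 < δ)
    (nrm : (Fin n → ℝ) → ℝ)
    (hnrm_eq : ∀ x, nrm x = 0 ↔ x = 0)
    (hnrm_smul : ∀ (a : ℝ) (x : Fin n → ℝ), nrm (a • x) = |a| * nrm x)
    (hnrm_add : ∀ x y : Fin n → ℝ, nrm (x + y) ≤ nrm x + nrm y)
    (N : ℕ) (hN : 0 < N)
    (w : Fin N → (Fin n → ℝ) → (Fin n → ℝ))
    (lam : Fin N → ℝ) (hlam : ∀ i, lam i ∈ Set.Ico (0 : ℝ) 1)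
    (hcontr : ∀ i, ∀ x y : Fin n → ℝ, nrm (w i x - w i y) ≤ lam i * nrm (x - y))
    (xf : Fin N → (Fin n → ℝ)) (hxf : ∀ i, w i (xf i) = xf i)
    (o : Fin n → ℝ)
    (rmax : ℝ) (hrmax_ub : ∀ i, nrm (xf i - o) ≤ rmax)
    (hrmax_mem : ∃ i, nrm (xf i - o) = rmax)
    (lmax : ℝ) (hlmax_ub : ∀ i, lam i ≤ lmax) (hlmax_mem : ∃ i, lam i = lmax)
    (θ : ℝ) (hθ : θ = cubeDiam n δ nrm / 2)
    (r : ℝ) (hr : r = (1 + lmax) / (1 - lmax) * rmax + θ * (1 - lmax)⁻¹) :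
    ∀ ε > 0,
      (∀ i, ∀ x ∈ {y ∈ Dgrid n δ | nrm (y - o) < r + ε},
        roundMap n δ (w i) x ∈ {y ∈ Dgrid n δ | nrm (y - o) < r + ε}) ∧
      (∀ i, minAbsorbing (roundMap n δ (w i)) (Dgrid n δ) ⊆
        {y ∈ Dgrid n δ | nrm (y - o) < r + ε}) := by
  -- basic norm facts
  have hnrm0 : nrm 0 = 0 := (hnrm_eq 0).mpr rfl
  have hneg : ∀ x : Fin n → ℝ, nrm (-x) = nrm x := by
    intro x
    have h := hnrm_smul (-1) x
    simpa using h
  have hnonneg : ∀ x : Fin n → ℝ, 0 ≤ nrm x := by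
    intro x
    have h := hnrm_add x (-x)
    rw [add_neg_cancel, hnrm0, hneg] at h
    linarith
  have htri : ∀ a b c : Fin n → ℝ, nrm (a - c) ≤ nrm (a - b) + nrm (b - c) := by
    intro a b c
    have h := hnrm_add (a - b) (b - c)
    rwa [sub_add_sub_cancel] at h
  -- finite subadditivity
  have hsum : ∀ (s : Finset (Fin n)) (f : Fin n → (Fin n → ℝ)),
      nrm (∑ j ∈ s, f j) ≤ ∑ j ∈ s, nrm (f j) := by
    intro s
    induction s using Finset.induction with
    | empty => intro f; simp [hnrm0]
    | insert _ _ h ih =>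
      intro f
      rw [Finset.sum_insert h, Finset.sum_insert h]
      exact le_trans (hnrm_add _ _) (by linarith [ih f])
  -- the cube-diameter set
  set Cset : Set ℝ := {r | ∃ x y : Fin n → ℝ,
    (∀ j, -(δ / 2) ≤ x j ∧ x j < δ / 2) ∧
    (∀ j, -(δ / 2) ≤ y j ∧ y j < δ / 2) ∧ r = nrm (x - y)} with hCset
  have hCdiam : cubeDiam n δ nrm = sSup Cset := rfl
  have h0mem : (0 : ℝ) ∈ Cset := by
    refine ⟨0, 0, ?_, ?_, ?_⟩
    · intro j; constructor
      · simp; linarith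
      · simp; linarith
    · intro j; constructor
      · simp; linarith
      · simp; linarith
    · simp [hnrm0]
  have hbdd : BddAbove Cset := by
    refine ⟨∑ j : Fin n, δ * nrm (fun k => if j = k then (1:ℝ) else 0), ?_⟩
    rintro rr ⟨x, y, hx, hy, hrr⟩
    have hv : ∀ j, |(x - y) j| ≤ δ := by
      intro j
      have h1 := (hx j).1; have h2 := (hx j).2
      have h3 := (hy j).1; have h4 := (hy j).2
      rw [abs_le]
      constructor <;> simp [Pi.sub_apply] <;> nlinarith
    calc rr = nrm (x - y) := hrr
      _ = nrm (∑ j : Fin n, (x - y) j • fun k => if j = k then (1:ℝ) else 0) := by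
          rw [← pi_eq_sum_univ (x - y)]
      _ ≤ ∑ j : Fin n, nrm ((x - y) j • fun k => if j = k then (1:ℝ) else 0) :=
          hsum _ _
      _ ≤ ∑ j : Fin n, δ * nrm (fun k => if j = k then (1:ℝ) else 0) := by
          apply Finset.sum_le_sum
          intro j _
          rw [hnrm_smul]
          exact mul_le_mul_of_nonneg_right (hv j) (hnonneg _)
  have hθ0 : 0 ≤ θ := by
    rw [hθ, hCdiam]
    have := le_csSup hbdd h0mem
    linarith
  -- the roundoff error bound
  have herr : ∀ z : Fin n → ℝ, nrm (roundPt n δ z - z) ≤ θ := by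
    intro z
    set e : Fin n → ℝ := roundPt n δ z - z with he
    have hej : ∀ j, |e j| ≤ δ / 2 := by
      intro j
      have hejval : e j = δ * ((⌊z j / δ + 1 / 2⌋ : ℤ) : ℝ) - z j := rfl
      have hu1 : ((⌊z j / δ + 1 / 2⌋ : ℤ) : ℝ) ≤ z j / δ + 1 / 2 := Int.floor_le _
      have hu2 : z j / δ + 1 / 2 < ((⌊z j / δ + 1 / 2⌋ : ℤ) : ℝ) + 1 := Int.lt_floor_add_one _
      have hb1 : 0 ≤ δ * (((⌊z j / δ + 1 / 2⌋ : ℤ) : ℝ) - z j / δ + 1 / 2) :=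
        mul_nonneg hδ.le (by linarith)
      have hb1' : δ * (((⌊z j / δ + 1 / 2⌋ : ℤ) : ℝ) - z j / δ + 1 / 2)
          = δ * ((⌊z j / δ + 1 / 2⌋ : ℤ) : ℝ) - z j + δ / 2 := by
        field_simp
      have hb2 : 0 ≤ δ * (1 / 2 - (((⌊z j / δ + 1 / 2⌋ : ℤ) : ℝ) - z j / δ)) :=
        mul_nonneg hδ.le (by linarith)
      have hb2' : δ * (1 / 2 - (((⌊z j / δ + 1 / 2⌋ : ℤ) : ℝ) - z j / δ))
          = δ / 2 - δ * ((⌊z j / δ + 1 / 2⌋ : ℤ) : ℝ) + z j := by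
        field_simp
        ring
      rw [abs_le, hejval]
      constructor <;> linarith
    have key : 2 * nrm e ≤ cubeDiam n δ nrm := by
      rw [hCdiam]
      apply le_of_forall_sub_le
      intro η hη
      by_cases hcase : 2 * nrm e ≤ η
      · have h0 : (0:ℝ) ≤ sSup Cset := le_csSup hbdd h0mem
        linarith
      · push_neg at hcase
        have hne : 0 < nrm e := by nlinarith
        set t : ℝ := 1 - η / (2 * nrm e) with ht
        have hd : 0 < η / (2 * nrm e) := div_pos hη (by linarith)
        have hd1 : η / (2 * nrm e) < 1 := (div_lt_one (by linarith)).mpr (by linarith)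
        have ht0 : 0 < t := by rw [ht]; linarith
        have ht1 : t < 1 := by rw [ht]; linarith
        have hmem : 2 * nrm e - η ∈ Cset := by
          refine ⟨t • e, -(t • e), ?_, ?_, ?_⟩
          · intro j
            have hj := hej j
            rw [abs_le] at hj
            constructor
            · simp only [Pi.smul_apply, smul_eq_mul]; nlinarith
            · simp only [Pi.smul_apply, smul_eq_mul]; nlinarith
          · intro j
            have hj := hej j
            rw [abs_le] at hj
            constructor
            · simp only [Pi.neg_apply, Pi.smul_apply, smul_eq_mul]; nlinarith
            · simp only [Pi.neg_apply, Pi.smul_apply, smul_eq_mul]; nlinarith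
          · have hds : t • e - -(t • e) = (2 * t) • e := by
              rw [sub_neg_eq_add, ← two_smul ℝ, smul_smul]
            rw [hds, hnrm_smul, abs_of_pos (by linarith : (0:ℝ) < 2 * t), ht]
            field_simp
        have := le_csSup hbdd hmem
        linarith
    rw [hθ]
    linarith
  -- constants
  obtain ⟨i0, hi0⟩ := hlmax_mem
  have hlmax0 : 0 ≤ lmax := hi0 ▸ (hlam i0).1
  have hlmax1 : lmax < 1 := hi0 ▸ (hlam i0).2
  obtain ⟨i1, hi1⟩ := hrmax_mem
  have hrmax0 : 0 ≤ rmax := hi1 ▸ hnonneg _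
  have h1l : (0:ℝ) < 1 - lmax := by linarith
  have hr0 : 0 ≤ r := by
    rw [hr]
    have := mul_nonneg (div_nonneg (by linarith : (0:ℝ) ≤ 1 + lmax) h1l.le) hrmax0
    have := mul_nonneg hθ0 (inv_nonneg.mpr h1l.le)
    linarith
  have hc : (1 - lmax) * r = θ + (1 + lmax) * rmax := by
    rw [hr]
    field_simp
    ring
  -- the key one-step estimate
  have hkey : ∀ (i : Fin N) (x : Fin n → ℝ),
      nrm (roundMap n δ (w i) x - o) ≤ lmax * nrm (x - o) + (θ + (1 + lmax) * rmax) := by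
    intro i x
    have h1 : nrm (roundMap n δ (w i) x - o) ≤
        nrm (roundMap n δ (w i) x - w i x) + nrm (w i x - o) := htri _ _ _
    have h2 : nrm (roundMap n δ (w i) x - w i x) ≤ θ := herr (w i x)
    have h3 : nrm (w i x - o) ≤ nrm (w i x - xf i) + nrm (xf i - o) := htri _ _ _
    have h4 : nrm (w i x - xf i) ≤ lam i * nrm (x - xf i) := by
      have := hcontr i x (xf i)
      rwa [hxf i] at this
    have h5 : nrm (x - xf i) ≤ nrm (x - o) + nrm (xf i - o) := by
      have h := htri x o (xf i)
      have hcomm : nrm (o - xf i) = nrm (xf i - o) := by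
        rw [← hneg (xf i - o), neg_sub]
      linarith
    have h6 : nrm (xf i - o) ≤ rmax := hrmax_ub i
    have h7 : lam i * nrm (x - xf i) ≤ lmax * nrm (x - xf i) :=
      mul_le_mul_of_nonneg_right (hlmax_ub i) (hnonneg _)
    have h8 : lmax * nrm (x - xf i) ≤ lmax * (nrm (x - o) + rmax) :=
      mul_le_mul_of_nonneg_left (by linarith) hlmax0
    have h9 : lmax * (nrm (x - o) + rmax) = lmax * nrm (x - o) + lmax * rmax := by ring
    have h10 : (1 + lmax) * rmax = rmax + lmax * rmax := by ring
    linarith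
  intro ε hε
  have hinv : ∀ i, ∀ x ∈ {y ∈ Dgrid n δ | nrm (y - o) < r + ε},
      roundMap n δ (w i) x ∈ {y ∈ Dgrid n δ | nrm (y - o) < r + ε} := by
    intro i x hx
    refine ⟨⟨fun j => ⌊w i x j / δ + 1 / 2⌋, rfl⟩, ?_⟩
    have h1 := hkey i x
    have h2 : lmax * nrm (x - o) ≤ lmax * (r + ε) :=
      mul_le_mul_of_nonneg_left hx.2.le hlmax0
    have h3 : lmax * (r + ε) = lmax * r + lmax * ε := by ring
    have h4 : (1 - lmax) * r = r - lmax * r := by ring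
    have h5 : lmax * ε < 1 * ε := mul_lt_mul_of_pos_right hlmax1 hε
    linarith
  refine ⟨hinv, ?_⟩
  intro i
  refine sInter_subset_of_mem ?_
  refine ⟨fun y hy => hy.1, ?_⟩
  intro x hx
  have hit : ∀ k, (roundMap n δ (w i))^[k] x ∈ Dgrid n δ ∧
      nrm ((roundMap n δ (w i))^[k] x - o) ≤ lmax ^ k * nrm (x - o) + r := by
    intro k
    induction k with
    | zero =>
      refine ⟨hx, ?_⟩
      simp only [Function.iterate_zero, id_eq, pow_zero, one_mul]
      linarith
    | succ k ih =>
      rw [Function.iterate_succ_apply']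
      refine ⟨⟨fun j => ⌊w i ((roundMap n δ (w i))^[k] x) j / δ + 1 / 2⌋, rfl⟩, ?_⟩
      have h1 := hkey i ((roundMap n δ (w i))^[k] x)
      have h2 : lmax * nrm ((roundMap n δ (w i))^[k] x - o) ≤
          lmax * (lmax ^ k * nrm (x - o) + r) :=
        mul_le_mul_of_nonneg_left ih.2 hlmax0
      have h3 : lmax * (lmax ^ k * nrm (x - o) + r) + (θ + (1 + lmax) * rmax)
          = lmax ^ (k + 1) * nrm (x - o) + r := by
        have hc' : θ + (1 + lmax) * rmax = (1 - lmax) * r := hc.symm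
        rw [hc', pow_succ]
        ring
      linarith
  obtain ⟨Nk, hNk⟩ : ∃ Nk : ℕ, lmax ^ Nk * nrm (x - o) < ε := by
    rcases (hnonneg (x - o)).eq_or_lt with h | h
    · exact ⟨0, by rw [← h]; simpa using hε⟩
    · obtain ⟨Nk, hNk⟩ := exists_pow_lt_of_lt_one (div_pos hε h) hlmax1
      exact ⟨Nk, (lt_div_iff₀ h).mp hNk⟩
  refine ⟨Nk, ?_⟩
  intro k hk
  obtain ⟨m, rfl⟩ := Nat.exists_eq_add_of_le hk
  clear hk
  induction m with
  | zero =>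
    refine ⟨(hit (Nk + 0)).1, ?_⟩
    have := (hit (Nk + 0)).2
    have hpow : lmax ^ (Nk + 0) * nrm (x - o) < ε := by simpa using hNk
    linarith
  | succ m ih =>
    rw [show Nk + (m + 1) = (Nk + m) + 1 from rfl, Function.iterate_succ_apply']
    exact hinv i _ ih
end
end

section
/- Let w_1, …, w_N : ℝ^n → ℝ^n be contractions with respect to the metric d, with contraction factors λ_1, …, λ_N ∈ [0, 1), set λ_max = max_i λ_i, and let w̃_1, …, w̃_N : D^n(δ) → D^n(δ) be their δ-roundoffs. Fix any starting point x̃_0 ∈ D^n(δ) and any sequence of indices i_1, i_2, … ∈ {1, …, N}, and define x_k = w_{i_k}(x_{k−1}) with x_0 = x̃_0, and x̃_k = w̃_{i_k}(x̃_{k−1}). Then for every k ∈ ℕ, d(x_k, x̃_k) ≤ θ(1 − λ_max)^{−1}. -/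
open Set

noncomputable section

/-- the orbit `x_k = w_{i_k}(x_{k-1})` of the contractions and the
orbit `x̃_k = w̃_{i_k}(x̃_{k-1})` of their δ-roundoffs, driven by the same index
sequence and started at the same grid point, shadow each other:
`d(x_k, x̃_k) ≤ θ(1-λ_max)⁻¹` for every `k`. -/
theorem stmt_17 (n : ℕ) (hn : 1 ≤ n) (δ : ℝ) (hδ : 0 < δ)
    (nrm : (Fin n → ℝ) → ℝ)
    (hnrm_eq : ∀ x, nrm x = 0 ↔ x = 0)
    (hnrm_smul : ∀ (a : ℝ) (x : Fin n → ℝ), nrm (a • x) = |a| * nrm x)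
    (hnrm_add : ∀ x y : Fin n → ℝ, nrm (x + y) ≤ nrm x + nrm y)
    (N : ℕ) (hN : 0 < N)
    (w : Fin N → (Fin n → ℝ) → (Fin n → ℝ))
    (lam : Fin N → ℝ) (hlam : ∀ i, lam i ∈ Set.Ico (0 : ℝ) 1)
    (hcontr : ∀ i, ∀ x y : Fin n → ℝ, nrm (w i x - w i y) ≤ lam i * nrm (x - y))
    (lmax : ℝ) (hlmax_ub : ∀ i, lam i ≤ lmax) (hlmax_mem : ∃ i, lam i = lmax)
    (θ : ℝ) (hθ : θ = cubeDiam n δ nrm / 2)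
    (x₀ : Fin n → ℝ) (hx₀ : x₀ ∈ Dgrid n δ)
    (idx : ℕ → Fin N)
    (x xt : ℕ → Fin n → ℝ)
    (hx0 : x 0 = x₀) (hxt0 : xt 0 = x₀)
    (hxs : ∀ k : ℕ, x (k + 1) = w (idx k) (x k))
    (hxts : ∀ k : ℕ, xt (k + 1) = roundMap n δ (w (idx k)) (xt k)) :
    ∀ k : ℕ, nrm (x k - xt k) ≤ θ * (1 - lmax)⁻¹ := by
  -- basic norm facts
  have hnrm0 : nrm 0 = 0 := (hnrm_eq 0).mpr rfl
  have hnrm_neg : ∀ z, nrm (-z) = nrm z := by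
    intro z
    have h := hnrm_smul (-1) z
    simpa using h
  have hnrm_nonneg : ∀ z, 0 ≤ nrm z := by
    intro z
    have h := hnrm_add z (-z)
    rw [add_neg_cancel, hnrm0, hnrm_neg] at h
    linarith
  -- triangle inequality for sums
  have hsum : ∀ (s : Finset (Fin n)) (f : Fin n → Fin n → ℝ),
      nrm (∑ j ∈ s, f j) ≤ ∑ j ∈ s, nrm (f j) := by
    intro s f
    induction s using Finset.cons_induction with
    | empty => simp [hnrm0]
    | cons a s ha ih =>
      rw [Finset.sum_cons, Finset.sum_cons]
      calc nrm (f a + ∑ j ∈ s, f j) ≤ nrm (f a) + nrm (∑ j ∈ s, f j) := hnrm_add _ _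
        _ ≤ nrm (f a) + ∑ j ∈ s, nrm (f j) := by linarith [ih]
  have hdecomp : ∀ z : Fin n → ℝ, nrm z ≤ ∑ j, |z j| * nrm (Pi.single j 1) := by
    intro z
    have hz : z = ∑ j, Pi.single j (z j) := (Finset.univ_sum_single z).symm
    calc nrm z = nrm (∑ j, Pi.single j (z j)) := by rw [← hz]
      _ ≤ ∑ j, nrm (Pi.single j (z j)) := hsum _ _
      _ = ∑ j, |z j| * nrm (Pi.single j 1) := by
          refine Finset.sum_congr rfl fun j _ => ?_
          have : (Pi.single j (z j) : Fin n → ℝ) = (z j) • (Pi.single j (1 : ℝ) : Fin n → ℝ) := by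
            ext i
            by_cases h : i = j <;> simp [h, Pi.single_apply]
          rw [this, hnrm_smul]
  -- the set defining cubeDiam
  set S : Set ℝ := {r | ∃ x y : Fin n → ℝ,
    (∀ j, -(δ / 2) ≤ x j ∧ x j < δ / 2) ∧
    (∀ j, -(δ / 2) ≤ y j ∧ y j < δ / 2) ∧ r = nrm (x - y)} with hS
  have hDdef : cubeDiam n δ nrm = sSup S := rfl
  have hbdd : BddAbove S := by
    refine ⟨∑ j, δ * nrm (Pi.single j 1), ?_⟩
    rintro r ⟨a, b, ha, hb, rfl⟩
    calc nrm (a - b) ≤ ∑ j, |(a - b) j| * nrm (Pi.single j 1) := hdecomp _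
      _ ≤ ∑ j, δ * nrm (Pi.single j 1) := by
          refine Finset.sum_le_sum fun j _ => ?_
          have h1 := ha j; have h2 := hb j
          have : |(a - b) j| ≤ δ := by
            rw [Pi.sub_apply, abs_le]
            constructor <;> nlinarith [h1.1, h1.2, h2.1, h2.2]
          exact mul_le_mul_of_nonneg_right this (hnrm_nonneg _) |>.trans
            (mul_le_mul_of_nonneg_right le_rfl (hnrm_nonneg _))
  have hS0 : (0 : ℝ) ∈ S := by
    refine ⟨0, 0, ?_, ?_, by simp [hnrm0]⟩ <;>
      exact fun j => ⟨by simp; linarith, by simp; linarith⟩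
  have hD0 : 0 ≤ cubeDiam n δ nrm := le_csSup hbdd hS0
  have hθ0 : 0 ≤ θ := by rw [hθ]; linarith
  -- roundoff error bound
  have hround : ∀ y : Fin n → ℝ, nrm (y - roundPt n δ y) ≤ θ := by
    intro y
    set e : Fin n → ℝ := y - roundPt n δ y with he
    have hebound : ∀ j, -(δ / 2) ≤ e j ∧ e j < δ / 2 := by
      intro j
      have hej : e j = y j - δ * (⌊y j / δ + 1 / 2⌋ : ℤ) := rfl
      set t : ℝ := y j / δ with ht
      have hyj : y j = δ * t := by rw [ht]; field_simp
      have h1 : (⌊t + 1 / 2⌋ : ℝ) ≤ t + 1 / 2 := Int.floor_le _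
      have h2 : t + 1 / 2 < (⌊t + 1 / 2⌋ : ℝ) + 1 := Int.lt_floor_add_one _
      rw [hej, hyj]
      constructor <;> nlinarith
    -- for each c ∈ [0,1), 2*c*nrm e ∈ S
    have hc : ∀ c : ℝ, 0 ≤ c → c < 1 → 2 * c * nrm e ≤ cubeDiam n δ nrm := by
      intro c hc0 hc1
      refine le_csSup hbdd ?_
      refine ⟨c • e, -(c • e), ?_, ?_, ?_⟩
      · intro j
        have h := hebound j
        simp only [Pi.smul_apply, smul_eq_mul]
        constructor <;> nlinarith [h.1, h.2]
      · intro j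
        have h := hebound j
        simp only [Pi.neg_apply, Pi.smul_apply, smul_eq_mul]
        constructor <;> nlinarith [h.1, h.2]
      · have : c • e - -(c • e) = (2 * c) • e := by
          ext j; simp [Pi.smul_apply]; ring
        rw [this, hnrm_smul, abs_of_nonneg (by linarith : (0:ℝ) ≤ 2 * c)]
    -- conclude 2 * nrm e ≤ cubeDiam
    have h2 : 2 * nrm e ≤ cubeDiam n δ nrm := by
      by_contra hcon
      push_neg at hcon
      set a := nrm e with ha
      set D := cubeDiam n δ nrm with hD
      have ha0 : 0 < a := by nlinarith [hnrm_nonneg e]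
      have hc0 : (0:ℝ) ≤ (D / (2 * a) + 1) / 2 := by positivity
      have hc1 : (D / (2 * a) + 1) / 2 < 1 := by
        have : D / (2 * a) < 1 := by
          rw [div_lt_one (by linarith)]; linarith
        linarith
      have hcc := hc _ hc0 hc1
      have hfrac : D / (2 * a) * a = D / 2 := by field_simp
      nlinarith
    rw [hθ]; linarith
  -- lmax facts
  obtain ⟨i0, hi0⟩ := hlmax_mem
  have hl0 : 0 ≤ lmax := hi0 ▸ (hlam i0).1
  have hl1 : lmax < 1 := hi0 ▸ (hlam i0).2
  have hden : 0 < 1 - lmax := by linarith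
  have hinv : 0 ≤ (1 - lmax)⁻¹ := by positivity
  -- the induction
  intro k
  induction k with
  | zero =>
    rw [hx0, hxt0, sub_self, hnrm0]
    positivity
  | succ k ih =>
    have hkey : x (k + 1) - xt (k + 1) =
        (w (idx k) (x k) - w (idx k) (xt k)) +
        (w (idx k) (xt k) - roundPt n δ (w (idx k) (xt k))) := by
      rw [hxs k, hxts k]
      unfold roundMap
      abel
    calc nrm (x (k + 1) - xt (k + 1))
        ≤ nrm (w (idx k) (x k) - w (idx k) (xt k)) +
          nrm (w (idx k) (xt k) - roundPt n δ (w (idx k) (xt k))) := by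
          rw [hkey]; exact hnrm_add _ _
      _ ≤ lmax * nrm (x k - xt k) + θ := by
          have h1 := hcontr (idx k) (x k) (xt k)
          have h2 := hround (w (idx k) (xt k))
          have h3 : lam (idx k) * nrm (x k - xt k) ≤ lmax * nrm (x k - xt k) :=
            mul_le_mul_of_nonneg_right (hlmax_ub _) (hnrm_nonneg _)
          linarith
      _ ≤ lmax * (θ * (1 - lmax)⁻¹) + θ :=
          add_le_add_left (mul_le_mul_of_nonneg_left ih hl0) _
      _ = θ * (1 - lmax)⁻¹ := by field_simp; ring
end
end

section
/- Let w_1, …, w_N : ℝ^n → ℝ^n be a hyperbolic IFS on (ℝ^n, d) with contraction factors λ_1, …, λ_N ∈ [0, 1), λ_max = max_i λ_i, and attractor A_∞. For each δ > 0 let w̃_1^{(δ)}, …, w̃_N^{(δ)} be the δ-roundoffs of the w_i, and let A(δ) ⊂ D^n(δ) be any nonempty set such that w̃_i^{(δ)}(A(δ)) ⊂ A(δ) for every i and every point x̃ ∈ A(δ) satisfies w̃_{i_k}^{(δ)} ∘ ⋯ ∘ w̃_{i_1}^{(δ)}(x̃) = x̃ for some k ≥ 1 and indices i_1, …, i_k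 ∈ {1, …, N}. Then A(δ) converges to A_∞ in the Hausdorff metric as δ → 0; that is, for every ε > 0 there exists δ_0 > 0 such that h(A(δ), A_∞) < ε for all δ ∈ (0, δ_0). -/
open Set

noncomputable section

/-- let `w₁, …, w_N` be a hyperbolic IFS with attractor `A_∞`, and
for each `δ > 0` let `A(δ) ⊆ D^n(δ)` be a nonempty set closed under the
δ-roundoffs `w̃ᵢ^{(δ)}` all of whose points are recurrent (each is a fixed point of
some nonempty composition of the roundoff maps).  Then `A(δ) → A_∞` in the
Hausdorff metric as `δ → 0`: for every `ε > 0` there is `δ₀ > 0` such that for all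
`0 < δ < δ₀`, `A_∞` and `A(δ)` are each contained in the open ε-neighbourhood of
the other (for the norm-induced metric `d(x,y) = nrm (x-y)`), i.e.
`h(A(δ), A_∞) < ε`. -/
theorem stmt_19 (n : ℕ) (hn : 1 ≤ n)
    (nrm : (Fin n → ℝ) → ℝ)
    (hnrm_eq : ∀ x, nrm x = 0 ↔ x = 0)
    (hnrm_smul : ∀ (a : ℝ) (x : Fin n → ℝ), nrm (a • x) = |a| * nrm x)
    (hnrm_add : ∀ x y : Fin n → ℝ, nrm (x + y) ≤ nrm x + nrm y)
    (N : ℕ) (hN : 0 < N)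
    (w : Fin N → (Fin n → ℝ) → (Fin n → ℝ))
    (lam : Fin N → ℝ) (hlam : ∀ i, lam i ∈ Set.Ico (0 : ℝ) 1)
    (hcontr : ∀ i, ∀ x y : Fin n → ℝ, nrm (w i x - w i y) ≤ lam i * nrm (x - y))
    (lmax : ℝ) (hlmax_ub : ∀ i, lam i ≤ lmax) (hlmax_mem : ∃ i, lam i = lmax)
    (Ainf : Set (Fin n → ℝ)) (hAinf_ne : Ainf.Nonempty)
    (hAinf_cpt : IsCompact Ainf) (hAinf_inv : Ainf = ⋃ i, w i '' Ainf)
    (A : ℝ → Set (Fin n → ℝ))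
    (hA : ∀ δ > (0 : ℝ), A δ ⊆ Dgrid n δ)
    (hAne : ∀ δ > (0 : ℝ), (A δ).Nonempty)
    (hAw : ∀ δ > (0 : ℝ), ∀ i, ∀ x ∈ A δ, roundMap n δ (w i) x ∈ A δ)
    (hrec : ∀ δ > (0 : ℝ), ∀ x ∈ A δ, ∃ L : List (Fin N), L ≠ [] ∧
      L.foldl (fun p i => roundMap n δ (w i) p) x = x) :
    ∀ ε > (0 : ℝ), ∃ δ₀ > (0 : ℝ), ∀ δ : ℝ, 0 < δ → δ < δ₀ →
      (∀ a ∈ Ainf, ∃ x ∈ A δ, nrm (a - x) < ε) ∧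
      (∀ x ∈ A δ, ∃ a ∈ Ainf, nrm (x - a) < ε) := by
  
  classical
  -- basic norm facts
  have hnrm0 : nrm 0 = 0 := (hnrm_eq 0).2 rfl
  have hnneg : ∀ x, 0 ≤ nrm x := by
    intro x
    have hneg : nrm (-x) = nrm x := by
      have h := hnrm_smul (-1) x
      simpa using h
    have h2 := hnrm_add x (-x)
    rw [add_neg_cancel, hnrm0, hneg] at h2
    linarith
  have hsymm : ∀ x y : Fin n → ℝ, nrm (x - y) = nrm (y - x) := by
    intro x y
    have h := hnrm_smul (-1) (y - x)
    simpa [neg_sub] using h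
  have htri : ∀ x y z : Fin n → ℝ, nrm (x - z) ≤ nrm (x - y) + nrm (y - z) := by
    intro x y z
    have h := hnrm_add (x - y) (y - z)
    simpa [sub_add_sub_cancel] using h
  -- the basis and the constant Cn
  set e : Fin n → (Fin n → ℝ) := fun i => fun j => if i = j then 1 else 0 with he
  set Cn : ℝ := ∑ i, nrm (e i) with hCn
  have hCn0 : 0 ≤ Cn := Finset.sum_nonneg fun i _ => hnneg _
  have hcoord : ∀ (z : Fin n → ℝ) (B : ℝ), (∀ i, |z i| ≤ B) → nrm z ≤ B * Cn := by
    intro z B hB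
    have hz : z = ∑ i, z i • e i := pi_eq_sum_univ z
    calc nrm z = nrm (∑ i, z i • e i) := by rw [← hz]
      _ ≤ ∑ i, nrm (z i • e i) :=
          Finset.le_sum_of_subadditive nrm hnrm0.le hnrm_add _ _
      _ = ∑ i, |z i| * nrm (e i) := by simp [hnrm_smul]
      _ ≤ ∑ i, B * nrm (e i) :=
          Finset.sum_le_sum (fun i _ => mul_le_mul_of_nonneg_right (hB i) (hnneg _))
      _ = B * Cn := by rw [hCn, Finset.mul_sum]
  -- roundoff error
  have hround : ∀ δ : ℝ, 0 < δ → ∀ y : Fin n → ℝ,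
      nrm (roundPt n δ y - y) ≤ δ / 2 * Cn := by
    intro δ hδ y
    apply hcoord
    intro i
    have h1 : ((⌊y i / δ + 1/2⌋ : ℤ) : ℝ) ≤ y i / δ + 1/2 := Int.floor_le _
    have h2 : y i / δ + 1/2 - 1 < ((⌊y i / δ + 1/2⌋ : ℤ) : ℝ) := Int.sub_one_lt_floor _
    have hy : δ * (y i / δ) = y i := by field_simp
    have : (roundPt n δ y - y) i = δ * ((⌊y i / δ + 1/2⌋ : ℤ) : ℝ) - y i := by
      simp [roundPt]
    rw [this, abs_le]
    constructor <;> nlinarith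
  -- lmax facts
  obtain ⟨i₀, hi₀⟩ := hlmax_mem
  have hl0 : 0 ≤ lmax := hi₀ ▸ (hlam i₀).1
  have hl1 : lmax < 1 := hi₀ ▸ (hlam i₀).2
  have h1l : (0:ℝ) < 1 - lmax := by linarith
  -- geometric sums
  have hgeom : ∀ k : ℕ, (∑ j ∈ Finset.range k, lmax ^ j) ≤ 1 / (1 - lmax) := by
    intro k
    rw [le_div_iff₀ h1l]
    have hid : (∑ j ∈ Finset.range k, lmax ^ j) * (1 - lmax) = 1 - lmax ^ k := by
      induction k with
      | zero => simp
      | succ k ih => rw [Finset.sum_range_succ, add_mul, ih, pow_succ]; ring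
    rw [hid]
    have := pow_nonneg hl0 k
    linarith
  -- orbit comparison
  have hkey : ∀ δ : ℝ, 0 < δ → ∀ L : List (Fin N), ∀ x a : Fin n → ℝ,
      nrm (L.foldl (fun p i => roundMap n δ (w i) p) x - L.foldl (fun p i => w i p) a) ≤
        lmax ^ L.length * nrm (x - a) +
          (∑ j ∈ Finset.range L.length, lmax ^ j) * (δ / 2 * Cn) := by
    intro δ hδ L
    induction L with
    | nil => intro x a; simp
    | cons i L ih =>
        intro x a
        have hstep : nrm (roundMap n δ (w i) x - w i a) ≤ δ/2*Cn + lmax * nrm (x - a) := by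
          have h1 : nrm (roundMap n δ (w i) x - w i x) ≤ δ/2*Cn := by
            simpa [roundMap] using hround δ hδ (w i x)
          have h2 : nrm (w i x - w i a) ≤ lmax * nrm (x - a) := by
            have h := hcontr i x a
            have hle : lam i * nrm (x - a) ≤ lmax * nrm (x - a) :=
              mul_le_mul_of_nonneg_right (hlmax_ub i) (hnneg _)
            linarith
          have h3 := htri (roundMap n δ (w i) x) (w i x) (w i a)
          linarith
        have hIH := ih (roundMap n δ (w i) x) (w i a)
        have hpow : (0:ℝ) ≤ lmax ^ L.length := pow_nonneg hl0 _
        have hE : (0:ℝ) ≤ δ/2*Cn := by positivity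
        have hmul : lmax ^ L.length * nrm (roundMap n δ (w i) x - w i a) ≤
            lmax ^ L.length * (δ/2*Cn + lmax * nrm (x - a)) :=
          mul_le_mul_of_nonneg_left hstep hpow
        simp only [List.foldl_cons, List.length_cons, Finset.sum_range_succ]
        calc nrm (List.foldl (fun p i => roundMap n δ (w i) p) (roundMap n δ (w i) x) L -
              List.foldl (fun p i => w i p) (w i a) L)
            ≤ lmax ^ L.length * nrm (roundMap n δ (w i) x - w i a) +
              (∑ j ∈ Finset.range L.length, lmax ^ j) * (δ / 2 * Cn) := hIH
          _ ≤ lmax ^ L.length * (δ/2*Cn + lmax * nrm (x - a)) +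
              (∑ j ∈ Finset.range L.length, lmax ^ j) * (δ / 2 * Cn) := by linarith
          _ = lmax ^ (L.length + 1) * nrm (x - a) +
              ((∑ j ∈ Finset.range L.length, lmax ^ j) + lmax ^ L.length) * (δ / 2 * Cn) := by
                rw [pow_succ]; ring
  -- iterating a fixed cycle
  have hiter : ∀ δ : ℝ, ∀ L : List (Fin N), ∀ x : Fin n → ℝ,
      L.foldl (fun p i => roundMap n δ (w i) p) x = x →
      ∀ m : ℕ, ∃ L' : List (Fin N), L'.length = m * L.length ∧
        L'.foldl (fun p i => roundMap n δ (w i) p) x = x := by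
    intro δ L x hx m
    induction m with
    | zero => exact ⟨[], by simp, rfl⟩
    | succ m ih =>
        obtain ⟨L', hlen, hfix⟩ := ih
        refine ⟨L' ++ L, ?_, ?_⟩
        · simp [hlen, Nat.succ_mul]
        · rw [List.foldl_append, hfix, hx]
  -- invariance of Ainf
  have hwA : ∀ i, ∀ a ∈ Ainf, w i a ∈ Ainf := by
    intro i a ha
    rw [hAinf_inv]
    exact Set.mem_iUnion.2 ⟨i, ⟨a, ha, rfl⟩⟩
  have hfoldA : ∀ L : List (Fin N), ∀ a ∈ Ainf, L.foldl (fun p i => w i p) a ∈ Ainf := by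
    intro L
    induction L with
    | nil => intro a ha; exact ha
    | cons i L ih =>
        intro a ha
        simp only [List.foldl_cons]
        exact ih _ (hwA i a ha)
  -- preimages of points of Ainf
  have hpre : ∀ k : ℕ, ∀ a ∈ Ainf, ∃ b ∈ Ainf, ∃ L : List (Fin N),
      L.length = k ∧ L.foldl (fun p i => w i p) b = a := by
    intro k
    induction k with
    | zero => intro a ha; exact ⟨a, ha, [], rfl, rfl⟩
    | succ k ih =>
        intro a ha
        have ha' : a ∈ ⋃ i, w i '' Ainf := hAinf_inv ▸ ha
        obtain ⟨i, hi⟩ := Set.mem_iUnion.1 ha'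
        obtain ⟨a', ha'2, hwa⟩ := hi
        obtain ⟨b, hb, L, hlen, hfold⟩ := ih a' ha'2
        refine ⟨b, hb, L ++ [i], by simp [hlen], ?_⟩
        rw [List.foldl_append, hfold]
        simpa using hwa
  -- A δ is closed under fold of roundoff maps
  have hAfold : ∀ δ : ℝ, 0 < δ → ∀ L : List (Fin N), ∀ x ∈ A δ,
      L.foldl (fun p i => roundMap n δ (w i) p) x ∈ A δ := by
    intro δ hδ L
    induction L with
    | nil => intro x hx; exact hx
    | cons i L ih =>
        intro x hx
        simp only [List.foldl_cons]
        exact ih _ (hAw δ hδ i x hx)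
  -- diameter bound on Ainf
  obtain ⟨p, hp⟩ := hAinf_ne
  obtain ⟨DD, hDD⟩ := Metric.isBounded_iff.mp hAinf_cpt.isBounded
  have hDD0 : 0 ≤ DD := le_trans dist_nonneg (hDD hp hp)
  have hDDnrm : ∀ u ∈ Ainf, ∀ v ∈ Ainf, nrm (u - v) ≤ DD * Cn := by
    intro u hu v hv
    apply hcoord
    intro i
    have h1 : dist (u i) (v i) ≤ dist u v := dist_le_pi_dist u v i
    have h2 : dist u v ≤ DD := hDD hu hv
    calc |u i - v i| = dist (u i) (v i) := (Real.dist_eq _ _).symm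
      _ ≤ DD := le_trans h1 h2
  -- main argument
  intro ε hε
  refine ⟨ε * (1 - lmax) / (Cn + 1), by positivity, ?_⟩
  intro δ hδ hδlt
  have hEpos : (0:ℝ) ≤ δ / 2 * Cn := by positivity
  have hδC : δ * (Cn + 1) < ε * (1 - lmax) := by
    have := (lt_div_iff₀ (by positivity : (0:ℝ) < Cn + 1)).mp hδlt
    linarith
  have hEδ : ∀ k : ℕ, (∑ j ∈ Finset.range k, lmax ^ j) * (δ / 2 * Cn) < ε / 2 := by
    intro k
    have h1 := hgeom k
    have h3 : (1/(1-lmax)) * (δ/2*Cn) < ε/2 := by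
      rw [div_mul_eq_mul_div, one_mul, div_lt_iff₀ h1l]
      nlinarith
    calc (∑ j ∈ Finset.range k, lmax ^ j) * (δ/2*Cn)
        ≤ (1/(1-lmax)) * (δ/2*Cn) := mul_le_mul_of_nonneg_right h1 hEpos
      _ < ε/2 := h3
  constructor
  · -- Ainf ⊆ ε-neighbourhood of A δ
    intro a ha
    obtain ⟨x₀, hx₀⟩ := hAne δ hδ
    obtain ⟨M, hM⟩ : ∃ M : ℝ, M = DD * Cn + nrm (p - x₀) := ⟨_, rfl⟩
    have hM0 : 0 ≤ M := by
      have := hnneg (p - x₀)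
      nlinarith [hM]
    obtain ⟨k, hk⟩ := exists_pow_lt_of_lt_one
      (show (0:ℝ) < (ε/2)/(M+1) by positivity) hl1
    obtain ⟨b, hb, L, hlen, hfold⟩ := hpre k a ha
    refine ⟨L.foldl (fun q i => roundMap n δ (w i) q) x₀, hAfold δ hδ L x₀ hx₀, ?_⟩
    have hbx : nrm (x₀ - b) ≤ M := by
      have h1 := htri b p x₀
      have h2 : nrm (b - p) ≤ DD * Cn := hDDnrm b hb p hp
      rw [hsymm, hM]
      linarith
    have hkM : lmax ^ k * (M + 1) < ε/2 :=
      (lt_div_iff₀ (by positivity : (0:ℝ) < M + 1)).mp hk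
    have hk' : lmax ^ k * nrm (x₀ - b) < ε/2 := by
      have hle : lmax ^ k * nrm (x₀ - b) ≤ lmax ^ k * (M + 1) :=
        mul_le_mul_of_nonneg_left (by linarith) (pow_nonneg hl0 k)
      linarith
    have hcmp := hkey δ hδ L x₀ b
    rw [hlen, hfold] at hcmp
    have hE := hEδ k
    rw [hsymm]
    linarith
  · -- A δ ⊆ ε-neighbourhood of Ainf
    intro x hx
    obtain ⟨L, hLne, hLfix⟩ := hrec δ hδ x hx
    have hkpos : 0 < L.length := List.length_pos_iff.mpr hLne
    obtain ⟨M, hM⟩ : ∃ M : ℝ, M = nrm (x - p) := ⟨_, rfl⟩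
    have hM0 : 0 ≤ M := hM ▸ hnneg _
    obtain ⟨m, hm⟩ := exists_pow_lt_of_lt_one
      (show (0:ℝ) < (ε/2)/(M+1) by positivity) hl1
    obtain ⟨L', hL'len, hL'fix⟩ := hiter δ L x hLfix m
    refine ⟨L'.foldl (fun q i => w i q) p, hfoldA L' p hp, ?_⟩
    have hcmp := hkey δ hδ L' x p
    rw [hL'fix] at hcmp
    have hpowle : lmax ^ L'.length ≤ lmax ^ m := by
      rw [hL'len]
      exact pow_le_pow_of_le_one hl0 hl1.le (le_mul_of_one_le_right (Nat.zero_le m) hkpos)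
    have h1 : lmax ^ m * (M + 1) < ε/2 :=
      (lt_div_iff₀ (by positivity : (0:ℝ) < M + 1)).mp hm
    have h2 : lmax ^ L'.length * nrm (x - p) ≤ lmax ^ m * (M + 1) :=
      mul_le_mul hpowle (by rw [← hM]; linarith) (hnneg _) (pow_nonneg hl0 m)
    have hE := hEδ L'.length
    linarith
end
end
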